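/- Under the standing hypotheses (f,g rational rotation numbers, f_t positive one-parameter family commuting with f, g_t = f_t∘g of constant rotation number), for any ε > 0 there exists t₀ such that for all t > t₀, the periodic set Per(f_t∘g) lies in the ε-neighborhood of P(f,g) ∪ ∂N(f,g). -/

import Mathlib

open Set Function Filter MeasureTheory

/-- An orientation-preserving homeomorphism of `ℝ` commuting with `x ↦ x + 1`,
i.e. a lift of an orientation-preserving circle homeomorphism. -/
structure HomeoZR : Type where
  toFun : ℝ → ℝ
  invFun : ℝ → ℝ
  left_inv : Function.LeftInverse invFun toFun
  right_inv : Function.RightInverse invFun toFun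
  strictMono : StrictMono toFun
  map_add_one : ∀ x, toFun (x + 1) = toFun x + 1

namespace HomeoZR

/-- The identity. -/
protected def id : HomeoZR :=
  ⟨_root_.id, _root_.id, fun _ => rfl, fun _ => rfl, strictMono_id, fun _ => rfl⟩

/-- Composition `f ∘ g`. -/
protected def comp (f g : HomeoZR) : HomeoZR where
  toFun := f.toFun ∘ g.toFun
  invFun := g.invFun ∘ f.invFun
  left_inv := fun x => by
    show g.invFun (f.invFun (f.toFun (g.toFun x))) = x
    rw [f.left_inv, g.left_inv]
  right_inv := fun x => by
    show f.toFun (g.toFun (g.invFun (f.invFun x))) = x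
    rw [g.right_inv, f.right_inv]
  strictMono := f.strictMono.comp g.strictMono
  map_add_one := fun x => by
    show f.toFun (g.toFun (x + 1)) = f.toFun (g.toFun x) + 1
    rw [g.map_add_one, f.map_add_one]

/-- Inverse. -/
protected def symm (f : HomeoZR) : HomeoZR where
  toFun := f.invFun
  invFun := f.toFun
  left_inv := f.right_inv
  right_inv := f.left_inv
  strictMono := by
    intro x y hxy
    rcases lt_trichotomy (f.invFun x) (f.invFun y) with h | h | h
    · exact h
    · exact absurd (by rw [← f.right_inv x, ← f.right_inv y, h]) (ne_of_lt hxy)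
    · have h2 := f.strictMono h
      rw [f.right_inv, f.right_inv] at h2
      exact absurd h2 (lt_asymm hxy)
  map_add_one := fun x => by
    have h1 : f.invFun (f.toFun (f.invFun x + 1)) = f.invFun (x + 1) := by
      rw [f.map_add_one, f.right_inv]
    rw [f.left_inv] at h1
    exact h1.symm

/-- The associated monotone degree-one lift. -/
def toLift (f : HomeoZR) : CircleDeg1Lift :=
  ⟨⟨f.toFun, f.strictMono.monotone⟩, f.map_add_one⟩

/-- The translation number `rot̃(f)`. -/
noncomputable def transNum (f : HomeoZR) : ℝ :=
  f.toLift.translationNumber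

/-- The canonical lift of the underlying circle homeomorphism: the lift whose
translation number lies in `[0,1)`, as a plain function. -/
noncomputable def canon (f : HomeoZR) : ℝ → ℝ :=
  fun x => f.toFun x - (⌊f.transNum⌋ : ℝ)

/-- The periodic points of the underlying circle homeomorphism, as a
`ℤ`-periodic subset of `ℝ`. -/
def Per (f : HomeoZR) : Set ℝ :=
  {x | ∃ n : ℕ, 0 < n ∧ ∃ m : ℤ, f.toFun^[n] x = x + m}

/-- The fixed points of the underlying circle homeomorphism, as a subset of `ℝ`. -/
def FixS (f : HomeoZR) : Set ℝ :=
  {x | ∃ m : ℤ, f.toFun x = x + m}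

/-- `q(f)`: the minimal period of the underlying circle homeomorphism. -/
noncomputable def q (f : HomeoZR) : ℕ :=
  sInf {n : ℕ | 0 < n ∧ ∃ x : ℝ, ∃ m : ℤ, f.toFun^[n] x = x + m}

/-- `p(f)`: the least `p ≥ 0` with `rot(f) = p / q(f)` mod `ℤ`. -/
noncomputable def p (f : HomeoZR) : ℕ :=
  sInf {p : ℕ | ∃ m : ℤ, f.transNum = (p : ℝ) / (f.q : ℝ) + (m : ℝ)}

/-- Natural powers. -/
protected def npow (f : HomeoZR) : ℕ → HomeoZR
  | 0 => HomeoZR.id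
  | n + 1 => (f.npow n).comp f

/-- Integer powers. -/
protected def zpow (f : HomeoZR) (k : ℤ) : HomeoZR :=
  if 0 ≤ k then f.npow k.toNat else f.symm.npow (-k).toNat

end HomeoZR

/-- `f` has rational rotation number. -/
def RatRot (f : HomeoZR) : Prop := ∃ r : ℚ, f.transNum = (r : ℝ)

/-- `F` is a positive one-parameter family (one-parameter group) commuting with `f`:
for `t ≠ 0` the fixed set of `F t` is the frontier of `Per f`, and for `t > 0` the
canonical lift of `F t` moves every point off the frontier strictly to the right. -/
def PosFamily (f : HomeoZR) (F : ℝ → HomeoZR) : Prop :=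
  (∀ s t, (F (s + t)).toFun = (F s).toFun ∘ (F t).toFun) ∧
  (∀ t, (F t).toFun ∘ f.toFun = f.toFun ∘ (F t).toFun) ∧
  (∀ t, t ≠ 0 → (F t).FixS = frontier f.Per) ∧
  (∀ t, 0 < t → ∀ x, x ∉ frontier f.Per → x < (F t).canon x)

/-- `δ_{f,g}(x,t)`, where `F` is a positive one-parameter family commuting with `f`. -/
noncomputable def delta (F : ℝ → HomeoZR) (g : HomeoZR) (x t : ℝ) : ℝ :=
  ((F t).canon ∘ g.canon)^[g.q] x - x - (g.p : ℝ)

/-- Persistent periodic points. -/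
def Pset (F : ℝ → HomeoZR) (g : HomeoZR) : Set ℝ := {x | ∀ t, delta F g x t = 0}

/-- Never-periodic points. -/
def Nset (F : ℝ → HomeoZR) (g : HomeoZR) : Set ℝ := {x | ∀ t, delta F g x t ≠ 0}

/-- Points periodic at a unique time. -/
def Uset (F : ℝ → HomeoZR) (g : HomeoZR) : Set ℝ := {x | ∃! t, delta F g x t = 0}

/-- `x` has a finite orbit in the circle under the group generated by `f` and `g`. -/
def FiniteOrbit (f g : HomeoZR) (x : ℝ) : Prop :=
  ∃ S : Set ℝ, S.Finite ∧ x ∈ S ∧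
    (∀ y ∈ S, ∃ z ∈ S, ∃ m : ℤ, f.toFun y = z + m) ∧
    (∀ y ∈ S, ∃ z ∈ S, ∃ m : ℤ, g.toFun y = z + m)

/-- `τ(f_1, …, f_n) = rot̃(f_n ∘ ⋯ ∘ f_1) − Σ rot̃(f_i)`. -/
noncomputable def tau (L : List HomeoZR) : ℝ :=
  (L.foldl (fun h u => u.comp h) HomeoZR.id).transNum
    - (L.map HomeoZR.transNum).sum

open CircleDeg1Lift Topology

namespace StmtAux

/-- A strictly monotone map with a periodic point fixes it. -/
theorem strictMono_iterate_fix {K : ℝ → ℝ} (hK : StrictMono K) {x : ℝ} {u : ℕ}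
    (hu : 0 < u) (h : K^[u] x = x) : K x = x := by
  rcases lt_trichotomy (K x) x with h1 | h1 | h1
  · exfalso
    have key : ∀ n, K^[n + 1] x < x := by
      intro n; induction n with
      | zero => simpa using h1
      | succ n ih =>
        calc K^[n+1+1] x = K (K^[n+1] x) := by rw [Function.iterate_succ_apply']
        _ < K x := hK ih
        _ < x := h1
    obtain ⟨v, rfl⟩ : ∃ v, u = v + 1 := ⟨u - 1, by omega⟩
    exact absurd h (ne_of_lt (key v))
  · exact h1
  · exfalso
    have key : ∀ n, x < K^[n + 1] x := by
      intro n; induction n with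
      | zero => simpa using h1
      | succ n ih =>
        calc x < K x := h1
        _ < K (K^[n+1] x) := hK ih
        _ = K^[n+1+1] x := (Function.iterate_succ_apply' K _ x).symm
    obtain ⟨v, rfl⟩ : ∃ v, u = v + 1 := ⟨u - 1, by omega⟩
    exact absurd h (ne_of_gt (key v))

namespace H

theorem inj (h : HomeoZR) : Function.Injective h.toFun := h.strictMono.injective

theorem surj (h : HomeoZR) : Function.Surjective h.toFun :=
  fun y => ⟨h.invFun y, h.right_inv y⟩

theorem coe_toLift (h : HomeoZR) : ⇑h.toLift = h.toFun := rfl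

theorem cont (h : HomeoZR) : Continuous h.toFun :=
  (continuous_iff_surjective (f := h.toLift)).2 (surj h)

theorem toLift_comp (a b : HomeoZR) : (a.comp b).toLift = a.toLift * b.toLift := by
  ext x; rfl

theorem coe_pow' (h : HomeoZR) (n : ℕ) : ⇑(h.toLift ^ n) = h.toFun^[n] := by
  rw [coe_pow]; rfl

theorem map_add_int (h : HomeoZR) (x : ℝ) (m : ℤ) : h.toFun (x + m) = h.toFun x + m :=
  h.toLift.map_add_int x m

end H

/-- τ continuity from continuity of iterates at `0`. -/
theorem tau_cont (Φ : ℝ → CircleDeg1Lift) (hcont : ∀ n : ℕ, Continuous fun c => ((Φ c) ^ n) 0) :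
    Continuous fun c => (Φ c).translationNumber := by
  have key : TendstoUniformly (fun (n : ℕ) (c : ℝ) => ((Φ c) ^ n) 0 / n)
      (fun c => (Φ c).translationNumber) atTop := by
    rw [Metric.tendstoUniformly_iff]
    intro ε hε
    obtain ⟨N, hN⟩ := exists_nat_gt (2 / ε)
    filter_upwards [Filter.eventually_ge_atTop (N + 1)] with n hn c
    have hn1 : (1:ℝ) ≤ n := by exact_mod_cast Nat.one_le_iff_ne_zero.2 (by omega)
    have hd := (Φ c).dist_pow_map_zero_mul_translationNumber_le n
    have hpos : (0:ℝ) < n := by linarith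
    rw [dist_comm]
    have heq : ((Φ c) ^ n) 0 / n - (Φ c).translationNumber
        = (((Φ c) ^ n) 0 - n * (Φ c).translationNumber) / n := by
      field_simp
    have h2 : 2 / ε < (n:ℝ) := by
      calc (2:ℝ)/ε < N := hN
      _ ≤ n := by exact_mod_cast (by omega : N ≤ n)
    have h3 : 2 < ε * n := by
      have := (div_lt_iff₀ hε).1 h2
      nlinarith
    calc dist (((Φ c) ^ n) 0 / n) (Φ c).translationNumber
        = dist (((Φ c) ^ n) 0) (n * (Φ c).translationNumber) / n := by
          rw [Real.dist_eq, Real.dist_eq, heq, abs_div, abs_of_pos hpos]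
      _ ≤ 1 / n := div_le_div_of_nonneg_right hd hpos.le
      _ < ε := by
          rw [div_lt_iff₀ hpos]
          nlinarith
  exact key.continuous (Filter.Frequently.of_forall fun n => (hcont n).div_const _)

/-- A continuous function with values in `c₀ + ℤ` is constant. -/
theorem int_valued_const {u : ℝ → ℝ} (hu : Continuous u) (v : ℝ)
    (hi : ∀ t, ∃ m : ℤ, u t = v + m) : ∀ t, u t = u 0 := by
  intro t
  by_contra hne
  obtain ⟨m0, hm0⟩ := hi 0
  obtain ⟨mt, hmt⟩ := hi t
  have hmm : m0 ≠ mt := by rintro rfl; exact hne (by rw [hm0, hmt])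
  -- pick a non-integer intermediate value
  rcases lt_or_gt_of_ne hmm with hlt | hlt
  · have h1 : u 0 < v + (m0 + 1/2 : ℝ) := by rw [hm0]; push_cast; linarith
    have h2 : v + (m0 + 1/2 : ℝ) < u t := by
      rw [hmt]; have : (m0:ℝ) + 1 ≤ mt := by exact_mod_cast hlt
      linarith
    have : v + (m0 + 1/2 : ℝ) ∈ Set.Icc (u 0) (u t) := ⟨h1.le, h2.le⟩
    rcases le_total 0 t with h0t | h0t
    · obtain ⟨c, _, hc⟩ := intermediate_value_Icc h0t hu.continuousOn (by simpa using this)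
      obtain ⟨mc, hmc⟩ := hi c
      rw [hmc] at hc
      have : (mc:ℝ) = m0 + 1/2 := by linarith
      have h3 : ((mc - m0 : ℤ):ℝ) = 1/2 := by push_cast; linarith
      have h4 : (2 * (mc - m0) : ℤ) = 1 := by
        have : ((2 * (mc - m0) : ℤ):ℝ) = 1 := by push_cast; linarith
        exact_mod_cast this
      omega
    · obtain ⟨c, _, hc⟩ := intermediate_value_Icc' h0t hu.continuousOn (by simpa using this)
      obtain ⟨mc, hmc⟩ := hi c
      rw [hmc] at hc
      have h3 : ((mc - m0 : ℤ):ℝ) = 1/2 := by push_cast; linarith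
      have h4 : (2 * (mc - m0) : ℤ) = 1 := by
        have : ((2 * (mc - m0) : ℤ):ℝ) = 1 := by push_cast; linarith
        exact_mod_cast this
      omega
  · have h1 : u t < v + (mt + 1/2 : ℝ) := by rw [hmt]; push_cast; linarith
    have h2 : v + (mt + 1/2 : ℝ) < u 0 := by
      rw [hm0]; have : (mt:ℝ) + 1 ≤ m0 := by exact_mod_cast hlt
      linarith
    have hmem : v + (mt + 1/2 : ℝ) ∈ Set.Icc (u t) (u 0) := ⟨h1.le, h2.le⟩
    rcases le_total 0 t with h0t | h0t
    · obtain ⟨c, _, hc⟩ := intermediate_value_Icc' h0t hu.continuousOn (by simpa using hmem)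
      obtain ⟨mc, hmc⟩ := hi c
      rw [hmc] at hc
      have h3 : ((mc - mt : ℤ):ℝ) = 1/2 := by push_cast; linarith
      have h4 : (2 * (mc - mt) : ℤ) = 1 := by
        have : ((2 * (mc - mt) : ℤ):ℝ) = 1 := by push_cast; linarith
        exact_mod_cast this
      omega
    · obtain ⟨c, _, hc⟩ := intermediate_value_Icc h0t hu.continuousOn (by simpa using hmem)
      obtain ⟨mc, hmc⟩ := hi c
      rw [hmc] at hc
      have h3 : ((mc - mt : ℤ):ℝ) = 1/2 := by push_cast; linarith
      have h4 : (2 * (mc - mt) : ℤ) = 1 := by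
        have : ((2 * (mc - mt) : ℤ):ℝ) = 1 := by push_cast; linarith
        exact_mod_cast this
      omega

end StmtAux

namespace StmtAux

theorem mul_den (r : ℚ) : r * (r.den : ℚ) = (r.num : ℚ) := by
  have h := Rat.num_div_den r
  have hd : ((r.den : ℚ)) ≠ 0 := Nat.cast_ne_zero.2 r.den_nz
  rw [div_eq_iff hd] at h
  linarith [h]

theorem den_dvd_iff {s : ℚ} {n : ℕ} : (∃ m : ℤ, (n : ℚ) * s = m) ↔ s.den ∣ n := by
  constructor
  · rintro ⟨m, hm⟩
    have h1 : (n : ℚ) * (s * s.den) = m * s.den := by rw [← mul_assoc, hm]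
    rw [mul_den] at h1
    have h2 : (n : ℤ) * s.num = m * s.den := by exact_mod_cast h1
    have h3 : (s.den : ℤ) ∣ (n : ℤ) * s.num := ⟨m, by linarith⟩
    have h4 : s.den ∣ n * s.num.natAbs := by
      have := Int.natAbs_dvd_natAbs.2 h3
      simpa [Int.natAbs_mul] using this
    exact Nat.Coprime.dvd_of_dvd_mul_right s.reduced.symm h4
  · rintro ⟨k, rfl⟩
    refine ⟨k * s.num, ?_⟩
    push_cast
    rw [mul_comm ((s.den:ℚ)) ((k:ℚ)), mul_assoc, mul_comm ((s.den:ℚ)) s, mul_den]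

theorem den_sub_int (r : ℚ) (k : ℤ) : (r - (k:ℚ)).den = r.den := by
  apply Nat.dvd_antisymm
  · have := Rat.add_den_dvd r (-(k:ℚ))
    simpa [Rat.den_intCast, sub_eq_add_neg] using this
  · have := Rat.add_den_dvd (r - (k:ℚ)) (k:ℚ)
    simpa [Rat.den_intCast] using this

theorem num_sub_int (r : ℚ) (k : ℤ) : (r - (k:ℚ)).num = r.num - k * r.den := by
  have h1 : ((r - (k:ℚ)).num : ℚ) = (r - (k:ℚ)) * ((r - (k:ℚ)).den : ℚ) := (mul_den _).symm
  rw [den_sub_int] at h1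
  have h2 : ((r - (k:ℚ)).num : ℚ) = (r.num : ℚ) - k * r.den := by
    rw [h1, sub_mul, mul_den]
  exact_mod_cast h2

theorem q_eq (g : HomeoZR) (r : ℚ) (hg : g.transNum = (r : ℝ)) : g.q = r.den := by
  have hc : Continuous g.toFun := H.cont g
  have hmem : ∀ n : ℕ, (0 < n ∧ ∃ x : ℝ, ∃ m : ℤ, g.toFun^[n] x = x + m) ↔ (0 < n ∧ r.den ∣ n) := by
    intro n
    constructor
    · rintro ⟨hn, x, m, hx⟩
      refine ⟨hn, den_dvd_iff.1 ⟨m, ?_⟩⟩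
      have hx' : (g.toLift ^ n) x = x + m := by rw [H.coe_pow']; exact hx
      have hτ := g.toLift.translationNumber_of_map_pow_eq_add_int hx' hn
      have hτ' : (r : ℝ) = (m : ℝ) / n := by rw [← hg]; exact hτ
      have hn0 : (n : ℝ) ≠ 0 := Nat.cast_ne_zero.2 hn.ne'
      have hr : (n : ℝ) * (r : ℝ) = m := by rw [hτ']; field_simp
      exact_mod_cast hr
    · rintro ⟨hn, hd⟩
      obtain ⟨m, hm⟩ := den_dvd_iff.2 hd
      have hg' : g.toLift.translationNumber = (r : ℝ) := hg
      have hτ : (g.toLift ^ n).translationNumber = m := by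
        rw [translationNumber_pow, hg']
        exact_mod_cast congrArg (fun q : ℚ => (q : ℝ)) hm
      obtain ⟨x, hx⟩ := ((g.toLift ^ n).translationNumber_eq_int_iff
        (g.toLift.continuous_pow hc n)).1 hτ
      refine ⟨hn, x, m, ?_⟩
      rw [← H.coe_pow']; exact hx
  have hset : {n : ℕ | 0 < n ∧ ∃ x : ℝ, ∃ m : ℤ, g.toFun^[n] x = x + m}
      = {n : ℕ | 0 < n ∧ r.den ∣ n} := Set.ext fun n => hmem n
  show sInf _ = r.den
  rw [hset]
  apply le_antisymm
  · exact Nat.sInf_le ⟨r.pos, dvd_rfl⟩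
  · have hne : ({n : ℕ | 0 < n ∧ r.den ∣ n}).Nonempty := ⟨r.den, r.pos, dvd_rfl⟩
    have := Nat.sInf_mem hne
    exact Nat.le_of_dvd this.1 this.2

theorem p_eq (g : HomeoZR) (r : ℚ) (hg : g.transNum = (r : ℝ)) :
    g.p = (r.num % (r.den : ℤ)).toNat := by
  have hq := q_eq g r hg
  have hdQ : ((r.den : ℚ)) ≠ 0 := Nat.cast_ne_zero.2 r.den_nz
  have hdR : ((r.den : ℝ)) ≠ 0 := Nat.cast_ne_zero.2 r.den_nz
  have hdZ : ((r.den : ℤ)) ≠ 0 := Int.natCast_ne_zero.2 r.den_nz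
  have hiff : ∀ p : ℕ, (∃ m : ℤ, g.transNum = (p : ℝ) / (g.q : ℝ) + (m : ℝ)) ↔
      (∃ m : ℤ, r.num = (p : ℤ) + m * r.den) := by
    intro p
    rw [hg, hq]
    constructor
    · rintro ⟨m, hm⟩
      refine ⟨m, ?_⟩
      have hQ : r = (p : ℚ) / (r.den : ℚ) + (m : ℚ) := by
        have : ((((p : ℚ) / (r.den : ℚ) + (m : ℚ)) : ℚ) : ℝ) = (p : ℝ) / (r.den : ℝ) + (m : ℝ) := by
          push_cast; ring
        apply (Rat.cast_injective (α := ℝ))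
        rw [this]; exact hm
      have h2 : r * (r.den : ℚ) = ((p:ℚ) / (r.den:ℚ) + (m:ℚ)) * r.den :=
        congrArg (fun z : ℚ => z * (r.den:ℚ)) hQ
      rw [mul_den, add_mul, div_mul_cancel₀ _ hdQ] at h2
      exact_mod_cast h2
    · rintro ⟨m, hm⟩
      refine ⟨m, ?_⟩
      have hQ : r = (p : ℚ) / (r.den : ℚ) + (m : ℚ) := by
        rw [div_add' _ _ _ hdQ, eq_div_iff hdQ, mul_den]
        exact_mod_cast hm
      have hcast : ((r:ℚ):ℝ) = ((((p:ℚ)/(r.den:ℚ) + (m:ℚ)) : ℚ) : ℝ) :=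
        congrArg (fun z : ℚ => (z : ℝ)) hQ
      rw [hcast]; push_cast; ring
  have hset : {p : ℕ | ∃ m : ℤ, g.transNum = (p : ℝ) / (g.q : ℝ) + (m : ℝ)}
      = {p : ℕ | ∃ m : ℤ, r.num = (p : ℤ) + m * r.den} := Set.ext fun p => hiff p
  show sInf _ = _
  rw [hset]
  set a : ℤ := r.num % (r.den : ℤ) with ha
  have ha0 : 0 ≤ a := Int.emod_nonneg _ hdZ
  have halt : a < r.den := Int.emod_lt_of_pos _ (by exact_mod_cast r.pos)
  have hamem : a.toNat ∈ {p : ℕ | ∃ m : ℤ, r.num = (p : ℤ) + m * r.den} := by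
    refine ⟨r.num / r.den, ?_⟩
    rw [Int.toNat_of_nonneg ha0, ha]
    rw [Int.emod_def]; ring
  apply le_antisymm
  · exact Nat.sInf_le hamem
  · have hne : ({p : ℕ | ∃ m : ℤ, r.num = (p : ℤ) + m * r.den}).Nonempty := ⟨a.toNat, hamem⟩
    obtain ⟨m, hm⟩ := Nat.sInf_mem hne
    set p := sInf {p : ℕ | ∃ m : ℤ, r.num = (p : ℤ) + m * r.den}
    obtain ⟨m', hm'⟩ := hamem
    -- r.num = p + m*den = a + m'*den  (with a = toNat a cast)
    have heq : (p : ℤ) - a = (m' - m) * r.den := by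
      rw [Int.toNat_of_nonneg ha0] at hm'
      have := hm.symm.trans hm'
      linarith [this]
    rcases le_or_gt (m' : ℤ) m with hmm | hmm
    · -- m' ≤ m ⇒ p - a = (m'-m)*den ≤ 0 ⇒ p ≤ a
      have h5 : (m' - m : ℤ) ≤ 0 := by linarith
      have h6 : (p : ℤ) - a ≤ 0 := by
        rw [heq]
        exact mul_nonpos_of_nonpos_of_nonneg h5 (by positivity)
      -- then p ≤ a, combined with p ∈ S and minimality... we need p ≥ a.toNat; suppose p < a.toNat
      rcases lt_or_ge (p:ℤ) a with hpa | hpa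
      · exfalso
        have h7 : (0:ℤ) < a - p := by linarith
        have h8 : (a - p : ℤ) = (m - m') * r.den := by linarith [heq]
        have h9 : (0:ℤ) < (m - m') := by
          by_contra h9
          push_neg at h9
          have : (m - m' : ℤ) * r.den ≤ 0 := mul_nonpos_of_nonpos_of_nonneg h9 (by positivity)
          omega
        have h10 : (r.den : ℤ) ≤ a - p := by
          rw [h8]
          calc (r.den:ℤ) = 1 * r.den := (one_mul _).symm
          _ ≤ (m - m') * r.den := by
            apply mul_le_mul_of_nonneg_right _ (by positivity)
            omega
        omega
      · omega
    · -- m < m' ⇒ p - a = (m'-m)*den ≥ den > 0 ⇒ p > a ⇒ p ≥ a.toNat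
      have h5 : (1:ℤ) ≤ m' - m := by omega
      have h6 : (r.den:ℤ) ≤ (p:ℤ) - a := by
        rw [heq]
        calc (r.den:ℤ) = 1 * r.den := (one_mul _).symm
        _ ≤ (m' - m) * r.den := mul_le_mul_of_nonneg_right h5 (by positivity)
      omega

theorem per_norm (G : HomeoZR) (r : ℚ) (hG : G.transNum = (r : ℝ)) {x : ℝ} (hx : x ∈ G.Per) :
    G.canon^[r.den] x = x + ((r.num % (r.den : ℤ) : ℤ) : ℝ) := by
  obtain ⟨n, hn, m, hxn⟩ := hx
  set k : ℤ := ⌊r⌋ with hk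
  set L : CircleDeg1Lift := ↑(CircleDeg1Lift.translate (Multiplicative.ofAdd (-(k:ℝ)))) * G.toLift
    with hL
  have hLapp : ∀ y, L y = G.toFun y - k := by
    intro y
    rw [hL, mul_apply]
    show -(k:ℝ) + G.toLift y = _
    show -(k:ℝ) + G.toFun y = _
    ring
  have hLcanon : ⇑L = G.canon := by
    funext y
    rw [hLapp]
    show _ = G.toFun y - (⌊G.transNum⌋ : ℝ)
    rw [hG, Rat.floor_cast]
  have hiter : ∀ (j : ℕ) (y : ℝ), L^[j] y = G.toFun^[j] y - (((j:ℤ) * k : ℤ) : ℝ) := by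
    intro j
    induction j with
    | zero => intro y; simp
    | succ j ih =>
      intro y
      rw [Function.iterate_succ_apply', Function.iterate_succ_apply', hLapp, ih]
      have h1 : G.toFun^[j] y - (((j:ℤ)*k : ℤ):ℝ) = G.toFun^[j] y + (((-(j:ℤ)*k) : ℤ):ℝ) := by
        push_cast; ring
      rw [h1]
      have h2 : G.toFun (G.toFun^[j] y + (((-(j:ℤ)*k : ℤ)):ℝ))
          = G.toFun (G.toFun^[j] y) + (((-(j:ℤ)*k : ℤ)):ℝ) :=
        G.toLift.map_add_int (G.toFun^[j] y) (-(j:ℤ)*k)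
      rw [h2]
      push_cast; ring
  have hLn : (L ^ n) x = x + ((m - (n:ℤ) * k : ℤ) : ℝ) := by
    have hcoe : ⇑(L ^ n) = (⇑L)^[n] := coe_pow L n
    rw [hcoe]
    rw [hiter n x, hxn]
    push_cast; ring
  have hτL2 := L.translationNumber_of_map_pow_eq_add_int hLn hn
  set s : ℚ := r - (k:ℚ) with hs
  have hsR : ((s : ℚ) : ℝ) = (r:ℝ) - (k:ℝ) := by rw [hs]; push_cast; ring
  have hτL : L.translationNumber = (r:ℝ) - (k:ℝ) := by
    have hcomm : Commute (↑(CircleDeg1Lift.translate (Multiplicative.ofAdd (-(k:ℝ)))) :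
        CircleDeg1Lift) G.toLift := by
      apply CircleDeg1Lift.ext
      intro y
      rw [mul_apply, mul_apply]
      show -(k:ℝ) + G.toLift y = G.toLift (-(k:ℝ) + y)
      have h3 : (-(k:ℝ)) + y = y + ((-k : ℤ):ℝ) := by push_cast; ring
      rw [h3, G.toLift.map_add_int]
      push_cast; ring
    rw [hL, translationNumber_mul_of_commute hcomm]
    have h4 : (↑(CircleDeg1Lift.translate (Multiplicative.ofAdd (-(k:ℝ)))) :
        CircleDeg1Lift).translationNumber = -(k:ℝ) := translationNumber_translate _
    rw [h4]
    show -(k:ℝ) + G.transNum = _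
    rw [hG]; ring
  have hn0 : (n:ℝ) ≠ 0 := Nat.cast_ne_zero.2 hn.ne'
  have h6 : (n:ℚ) * s = ((m - (n:ℤ)*k : ℤ):ℚ) := by
    have h5 : (n:ℝ) * ((s:ℚ):ℝ) = ((m - (n:ℤ)*k : ℤ):ℝ) := by
      rw [hsR, ← hτL, hτL2]
      field_simp
    exact_mod_cast h5
  obtain ⟨u, hu⟩ := den_dvd_iff.1 ⟨_, h6⟩
  have hu0 : 0 < u := by
    rcases Nat.eq_zero_or_pos u with h | h
    · subst h; omega
    · exact h
  have hden : s.den = r.den := den_sub_int r k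
  have h7 : (m - (n:ℤ)*k) = (u:ℤ) * s.num := by
    have h8 : ((m - (n:ℤ)*k : ℤ):ℚ) = (u:ℚ) * (s.num:ℚ) := by
      rw [← h6, hu]
      push_cast
      rw [mul_comm ((s.den:ℚ)) ((u:ℚ)), mul_assoc, mul_comm ((s.den:ℚ)) s, mul_den]
    exact_mod_cast h8
  set K : ℝ → ℝ := fun y => L^[s.den] y - (s.num : ℝ) with hKdef
  have hLint : ∀ (c : ℤ) (z : ℝ), L^[s.den] (z + (c:ℝ)) = L^[s.den] z + (c:ℝ) := by
    intro c z
    have := (L ^ s.den).map_add_int z c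
    rwa [coe_pow] at this
  have hKiter : ∀ (j : ℕ) (y : ℝ), K^[j] y = L^[s.den * j] y - (((j:ℤ) * s.num : ℤ) : ℝ) := by
    intro j
    induction j with
    | zero => intro y; simp
    | succ j ih =>
      intro y
      rw [Function.iterate_succ_apply', hKdef]
      show L^[s.den] (K^[j] y) - (s.num:ℝ) = _
      rw [ih y]
      have h9 : L^[s.den*j] y - (((j:ℤ)*s.num : ℤ):ℝ) = L^[s.den*j] y + ((-((j:ℤ)*s.num) : ℤ):ℝ) := by
        push_cast; ring
      rw [h9, hLint]
      rw [show s.den * (j+1) = s.den + s.den * j by ring, Function.iterate_add_apply]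
      push_cast; ring
  have hKfix : K^[u] x = x := by
    rw [hKiter u x, ← hu]
    have h10 : L^[n] x = x + ((m - (n:ℤ)*k : ℤ):ℝ) := by
      rw [hiter n x, hxn]; push_cast; ring
    rw [h10, h7]
    push_cast; ring
  have hKmono : StrictMono K := by
    have hLmono : StrictMono ⇑L := by
      intro a b hab
      rw [hLapp, hLapp]
      have := G.strictMono hab
      linarith
    intro a b hab
    have := hLmono.iterate s.den hab
    simp only [hKdef]
    linarith [this]
  have hfix := strictMono_iterate_fix hKmono hu0 hKfix
  have hfinal : L^[s.den] x = x + (s.num:ℝ) := by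
    have : L^[s.den] x - (s.num:ℝ) = x := hfix
    linarith
  have hnum : s.num = r.num % (r.den:ℤ) := by
    rw [hs, num_sub_int, hk]
    have hfl : ⌊r⌋ = r.num / (r.den:ℤ) := by
      conv_lhs => rw [← Rat.num_div_den r]
      exact Rat.floor_intCast_div_natCast r.num r.den
    rw [hfl, Int.emod_def]
    ring
  calc G.canon^[r.den] x = L^[s.den] x := by rw [hLcanon, hden]
  _ = x + (s.num:ℝ) := hfinal
  _ = x + ((r.num % (r.den:ℤ) : ℤ):ℝ) := by rw [hnum]

end StmtAux

namespace StmtAux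

/-- `HomeoZR` as a homeomorphism of `ℝ`. -/
def toHomeo (h : HomeoZR) : ℝ ≃ₜ ℝ where
  toFun := h.toFun
  invFun := h.invFun
  left_inv := h.left_inv
  right_inv := h.right_inv
  continuous_toFun := H.cont h
  continuous_invFun := H.cont h.symm

theorem per_int {Gh : HomeoZR} {x : ℝ} (k : ℤ) (hx : x ∈ Gh.Per) : x + (k:ℝ) ∈ Gh.Per := by
  obtain ⟨n, hn, m, hm⟩ := hx
  refine ⟨n, hn, m, ?_⟩
  have hit : ∀ (j : ℕ) (y : ℝ), Gh.toFun^[j] (y + (k:ℝ)) = Gh.toFun^[j] y + (k:ℝ) := by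
    intro j
    induction j with
    | zero => intro y; simp
    | succ j ih =>
      intro y
      rw [Function.iterate_succ_apply, H.map_add_int Gh y k, ih (Gh.toFun y),
        ← Function.iterate_succ_apply]
  rw [hit n x, hm]
  ring

section Family

variable {f g : HomeoZR} {F : ℝ → HomeoZR}

theorem Fadd (hF : PosFamily f F) (s t : ℝ) (x : ℝ) :
    (F (s + t)).toFun x = (F s).toFun ((F t).toFun x) := by
  rw [hF.1 s t]; rfl

theorem F0 (hF : PosFamily f F) (x : ℝ) : (F 0).toFun x = x := by
  have h : (F 0).toFun x = (F 0).toFun ((F 0).toFun x) := by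
    have := Fadd hF 0 0 x
    norm_num at this
    exact this
  exact (H.inj (F 0) h).symm

variable {x₀ : ℝ}

theorem Ffix0 (hF : PosFamily f F) (hx₀ : x₀ ∈ frontier f.Per) (t : ℝ) :
    (F t).toFun x₀ = x₀ := by
  have hm : ∀ t : ℝ, ∃ m : ℤ, (F t).toFun x₀ = x₀ + m := by
    intro t
    rcases eq_or_ne t 0 with rfl | ht
    · exact ⟨0, by rw [F0 hF]; simp⟩
    · have h := hF.2.2.1 t ht
      have : x₀ ∈ (F t).FixS := h ▸ hx₀
      exact this
  choose M hM using hm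
  have hdouble : ∀ t : ℝ, M t = 2 * M (t/2) := by
    intro t
    have ht : t = t/2 + t/2 := by ring
    have h1 : (F (t/2 + t/2)).toFun x₀ = x₀ + ((2 * M (t/2) : ℤ) : ℝ) := by
      rw [Fadd hF, hM (t/2), H.map_add_int (F (t/2)) x₀ (M (t/2)), hM (t/2)]
      push_cast; ring
    rw [← ht] at h1
    have h2 := hM t
    have h3 : ((M t : ℤ) : ℝ) = ((2 * M (t/2) : ℤ) : ℝ) := by
      rw [h2] at h1; linarith [h1]
    exact_mod_cast h3
  have hdvd : ∀ (k : ℕ) (t : ℝ), (2^k : ℤ) ∣ M t := by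
    intro k
    induction k with
    | zero => intro t; simp
    | succ k ih =>
      intro t
      rw [hdouble t]
      obtain ⟨c, hc⟩ := ih (t/2)
      exact ⟨c, by rw [hc]; ring⟩
  have hM0 : M t = 0 := by
    by_contra h
    obtain ⟨k, hk⟩ : ∃ k : ℕ, (M t).natAbs < 2^k := ⟨(M t).natAbs, Nat.lt_pow_self (by norm_num)⟩
    have h1 : (2^k : ℤ) ∣ |M t| := (dvd_abs _ _).2 (hdvd k t)
    have h2 : (2^k : ℤ) ≤ |M t| := Int.le_of_dvd (abs_pos.2 h) h1
    have h3 : |M t| = ((M t).natAbs : ℤ) := Int.abs_eq_natAbs _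
    have h4 : ((2:ℤ)^k) = ((2^k : ℕ) : ℤ) := by push_cast; ring
    omega
  have := hM t
  rw [hM0] at this
  simpa using this

theorem tau0 (hF : PosFamily f F) (hx₀ : x₀ ∈ frontier f.Per) (t : ℝ) :
    (F t).transNum = 0 := by
  have h : (F t).toLift x₀ = x₀ + ((0:ℤ):ℝ) := by
    show (F t).toFun x₀ = x₀ + ((0:ℤ):ℝ)
    rw [Ffix0 hF hx₀ t]; simp
  have := (F t).toLift.translationNumber_of_eq_add_int h
  simpa [HomeoZR.transNum] using this

theorem canon_eq (hF : PosFamily f F) (hx₀ : x₀ ∈ frontier f.Per) (t : ℝ) :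
    (F t).canon = (F t).toFun := by
  funext y
  show (F t).toFun y - (⌊(F t).transNum⌋ : ℝ) = (F t).toFun y
  rw [tau0 hF hx₀ t]
  norm_num

theorem Ffr (hF : PosFamily f F) (hx₀ : x₀ ∈ frontier f.Per) (t : ℝ) {y : ℝ}
    (hy : y ∈ frontier f.Per) : (F t).toFun y = y := by
  rcases eq_or_ne t 0 with rfl | ht
  · exact F0 hF y
  · have h := hF.2.2.1 t ht
    have hy' : y ∈ (F t).FixS := h ▸ hy
    obtain ⟨m, hm⟩ := hy'
    have hτ := (F t).toLift.translationNumber_of_eq_add_int (x := y) (m := m) hm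
    have h0 := tau0 hF hx₀ t
    have : (m : ℝ) = 0 := by rw [← hτ]; exact h0
    have : m = 0 := by exact_mod_cast this
    rw [hm, this]; simp

theorem Fgt (hF : PosFamily f F) (hx₀ : x₀ ∈ frontier f.Per) {t : ℝ} (ht : 0 < t) {y : ℝ}
    (hy : y ∉ frontier f.Per) : y < (F t).toFun y := by
  have := hF.2.2.2 t ht y hy
  rwa [canon_eq hF hx₀ t] at this

theorem Fge (hF : PosFamily f F) (hx₀ : x₀ ∈ frontier f.Per) {t : ℝ} (ht : 0 ≤ t) (y : ℝ) :
    y ≤ (F t).toFun y := by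
  rcases eq_or_lt_of_le ht with rfl | ht'
  · rw [F0 hF]
  · by_cases hy : y ∈ frontier f.Per
    · rw [Ffr hF hx₀ t hy]
    · exact (Fgt hF hx₀ ht' hy).le

theorem Fmono (hF : PosFamily f F) (hx₀ : x₀ ∈ frontier f.Per) {s t : ℝ} (hst : s ≤ t) (y : ℝ) :
    (F s).toFun y ≤ (F t).toFun y := by
  have h : t = (t - s) + s := by ring
  rw [h, Fadd hF]
  exact Fge hF hx₀ (by linarith) _

theorem Ffr_iff (hF : PosFamily f F) (hx₀ : x₀ ∈ frontier f.Per) {t : ℝ} (ht : t ≠ 0) {y : ℝ} :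
    (F t).toFun y = y ↔ y ∈ frontier f.Per := by
  constructor
  · intro h
    have := hF.2.2.1 t ht
    rw [← this]
    exact ⟨0, by rw [h]; simp⟩
  · exact Ffr hF hx₀ t

theorem Ffr_pre (hF : PosFamily f F) (hx₀ : x₀ ∈ frontier f.Per) (t : ℝ) {y : ℝ}
    (hy : (F t).toFun y ∈ frontier f.Per) : y ∈ frontier f.Per := by
  rcases eq_or_ne t 0 with rfl | ht
  · rwa [F0 hF] at hy
  · have h1 : (F t).toFun ((F t).toFun y) = (F t).toFun y := Ffr hF hx₀ t hy
    have h2 : (F t).toFun y = y := H.inj (F t) h1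
    rwa [← h2]

theorem Fcont_t (hF : PosFamily f F) (hx₀ : x₀ ∈ frontier f.Per) (y : ℝ) :
    Continuous fun t => (F t).toFun y := by
  set h : ℝ → ℝ := fun t => (F t).toFun y with hh
  have hmono : Monotone h := fun s t hst => Fmono hF hx₀ hst y
  have hshift : ∀ s t : ℝ, ContinuousAt h (t + s) ↔ ContinuousAt h t := by
    intro s t
    have hcomp : (h ∘ (Homeomorph.addRight s)) = (toHomeo (F s)) ∘ h := by
      funext u
      show h (u + s) = (F s).toFun (h u)
      rw [hh]
      simp only
      rw [add_comm u s, Fadd hF]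
    calc ContinuousAt h (t + s)
        ↔ ContinuousAt (h ∘ (Homeomorph.addRight s)) t :=
          ((Homeomorph.addRight s).comp_continuousAt_iff' h t).symm
      _ ↔ ContinuousAt ((toHomeo (F s)) ∘ h) t := by rw [hcomp]
      _ ↔ ContinuousAt h t := (toHomeo (F s)).comp_continuousAt_iff h t
  rw [continuous_iff_continuousAt]
  intro t
  by_contra hc
  have hall : ∀ u : ℝ, ¬ ContinuousAt h u := by
    intro u hu
    have h2 := (hshift (t - u) u).2 hu
    rw [show u + (t - u) = t by ring] at h2
    exact hc h2
  have hcount := hmono.countable_not_continuousAt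
  have hsub : (Set.univ : Set ℝ) ⊆ {x | ¬ ContinuousAt h x} := fun u _ => hall u
  exact Cardinal.not_countable_real (Set.Countable.mono hsub hcount)

theorem Fcont_comp (hF : PosFamily f F) (hx₀ : x₀ ∈ frontier f.Per) {w : ℝ → ℝ}
    (hw : Continuous w) : Continuous fun t => (F t).toFun (w t) := by
  rw [continuous_iff_continuousAt]
  intro t₀
  rw [Metric.continuousAt_iff]
  intro ε hε
  set y₀ := w t₀ with hy₀
  set L := (F t₀).toFun y₀ with hLdef
  -- continuity in t at y₀
  have h1 := (Fcont_t hF hx₀ y₀).continuousAt (x := t₀)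
  rw [Metric.continuousAt_iff] at h1
  obtain ⟨δ₁, hδ₁, hδ₁p⟩ := h1 (ε/3) (by linarith)
  set a := t₀ - δ₁/2 with hadef
  set b := t₀ + δ₁/2 with hbdef
  have hFa : dist ((F a).toFun y₀) L < ε/3 := by
    apply hδ₁p
    rw [Real.dist_eq, hadef]
    rw [abs_of_nonpos (by linarith)]
    linarith
  have hFb : dist ((F b).toFun y₀) L < ε/3 := by
    apply hδ₁p
    rw [Real.dist_eq, hbdef]
    rw [abs_of_nonneg (by linarith)]
    linarith
  -- continuity in x of F a ∘ w and F b ∘ w at t₀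
  have h2 := ((H.cont (F a)).comp hw).continuousAt (x := t₀)
  rw [Metric.continuousAt_iff] at h2
  obtain ⟨δ₂, hδ₂, hδ₂p⟩ := h2 (ε/3) (by linarith)
  have h3 := ((H.cont (F b)).comp hw).continuousAt (x := t₀)
  rw [Metric.continuousAt_iff] at h3
  obtain ⟨δ₃, hδ₃, hδ₃p⟩ := h3 (ε/3) (by linarith)
  refine ⟨min (δ₁/2) (min δ₂ δ₃), by positivity, ?_⟩
  intro t ht
  have ht1 : |t - t₀| < δ₁/2 := lt_of_lt_of_le (by rw [← Real.dist_eq]; exact ht) (min_le_left _ _)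
  have ht2 : dist t t₀ < δ₂ := lt_of_lt_of_le ht ((min_le_right _ _).trans (min_le_left _ _))
  have ht3 : dist t t₀ < δ₃ := lt_of_lt_of_le ht ((min_le_right _ _).trans (min_le_right _ _))
  have hab1 : a ≤ t := by
    rw [hadef]
    have := abs_lt.1 ht1
    linarith [this.1]
  have hab2 : t ≤ b := by
    rw [hbdef]
    have := abs_lt.1 ht1
    linarith [this.2]
  have hlow : (F a).toFun (w t) ≤ (F t).toFun (w t) := Fmono hF hx₀ hab1 _
  have hhigh : (F t).toFun (w t) ≤ (F b).toFun (w t) := Fmono hF hx₀ hab2 _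
  have e2 := hδ₂p ht2
  have e3 := hδ₃p ht3
  rw [Real.dist_eq] at e2 e3 hFa hFb ⊢
  simp only [Function.comp_apply] at e2 e3
  have l1 : L - ε < (F a).toFun (w t) := by
    linarith [(abs_lt.1 e2).1, (abs_lt.1 hFa).1]
  have l2 : (F b).toFun (w t) < L + ε := by
    linarith [(abs_lt.1 e3).2, (abs_lt.1 hFb).2]
  rw [abs_lt]
  exact ⟨by linarith, by linarith⟩

theorem u_const (hF : PosFamily f F) (hx₀ : x₀ ∈ frontier f.Per)
    (hconst : ∀ t : ℝ, ∃ m : ℤ, ((F t).comp g).transNum = g.transNum + m) (t : ℝ) :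
    ((F t).comp g).transNum = g.transNum := by
  set Φ : ℝ → CircleDeg1Lift := fun t => ((F t).comp g).toLift with hΦ
  have hcont : ∀ n : ℕ, Continuous fun c => ((Φ c) ^ n) 0 := by
    intro n
    induction n with
    | zero =>
      simp only [pow_zero]
      exact continuous_const
    | succ n ih =>
      have heq : (fun c => ((Φ c)^(n+1)) 0) = fun c => (F c).toFun (g.toFun (((Φ c)^n) 0)) := by
        funext c
        rw [pow_succ', mul_apply]
        rfl
      rw [heq]
      exact Fcont_comp hF hx₀ ((H.cont g).comp ih)
  have hu : Continuous fun c => (Φ c).translationNumber := tau_cont Φ hcont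
  have hval := int_valued_const hu g.transNum (fun s => hconst s) t
  have h0 : ((F 0).comp g).transNum = g.transNum := by
    have hl : ((F 0).comp g).toLift = g.toLift := by
      apply CircleDeg1Lift.ext
      intro y
      show (F 0).toFun (g.toFun y) = g.toFun y
      exact F0 hF _
    show ((F 0).comp g).toLift.translationNumber = g.toLift.translationNumber
    rw [hl]
  calc ((F t).comp g).transNum = ((F 0).comp g).transNum := hval
  _ = g.transNum := h0

theorem delta_per (hF : PosFamily f F) (hx₀ : x₀ ∈ frontier f.Per)
    (hconst : ∀ t : ℝ, ∃ m : ℤ, ((F t).comp g).transNum = g.transNum + m)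
    {r : ℚ} (hg : g.transNum = (r:ℝ)) (t : ℝ) {x : ℝ} (hx : x ∈ ((F t).comp g).Per) :
    delta F g x t = 0 := by
  have hτ : ((F t).comp g).transNum = (r:ℝ) := by rw [u_const hF hx₀ hconst t, hg]
  have hq := q_eq g r hg
  have hp := p_eq g r hg
  have hnorm := per_norm ((F t).comp g) r hτ hx
  have hcanon : ((F t).comp g).canon = (F t).canon ∘ g.canon := by
    funext y
    show ((F t).comp g).toFun y - (⌊((F t).comp g).transNum⌋:ℝ) = (F t).canon (g.canon y)
    rw [canon_eq hF hx₀ t]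
    show (F t).toFun (g.toFun y) - (⌊((F t).comp g).transNum⌋:ℝ)
        = (F t).toFun (g.toFun y - (⌊g.transNum⌋:ℝ))
    have hsub : (F t).toFun (g.toFun y - ((⌊(r:ℝ)⌋:ℤ):ℝ)) = (F t).toFun (g.toFun y) - ((⌊(r:ℝ)⌋:ℤ):ℝ) :=
      (F t).toLift.map_sub_int (g.toFun y) ⌊(r:ℝ)⌋
    rw [hτ, hg, hsub]
  show ((F t).canon ∘ g.canon)^[g.q] x - x - (g.p:ℝ) = 0
  rw [← hcanon, hq, hnorm, hp]
  have hdZ : ((r.den:ℤ)) ≠ 0 := Int.natCast_ne_zero.2 r.den_nz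
  have h0 : (0:ℤ) ≤ r.num % (r.den:ℤ) := Int.emod_nonneg _ hdZ
  have hc : (((r.num % (r.den:ℤ)).toNat : ℕ) : ℝ) = ((r.num % (r.den:ℤ) : ℤ) : ℝ) := by
    exact_mod_cast Int.toNat_of_nonneg h0
  rw [hc]; ring

theorem delta_mono (hF : PosFamily f F) (hx₀ : x₀ ∈ frontier f.Per) (x : ℝ) {t t' : ℝ}
    (h : t ≤ t') : delta F g x t ≤ delta F g x t' := by
  have key : ∀ n : ℕ, ((F t).canon ∘ g.canon)^[n] x ≤ ((F t').canon ∘ g.canon)^[n] x := by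
    intro n
    induction n with
    | zero => exact le_refl x
    | succ n ih =>
      rw [Function.iterate_succ_apply', Function.iterate_succ_apply']
      have hg1 : g.canon (((F t).canon ∘ g.canon)^[n] x) ≤ g.canon (((F t').canon ∘ g.canon)^[n] x) := by
        show g.toFun _ - _ ≤ g.toFun _ - _
        have := g.strictMono.monotone ih
        linarith
      calc ((F t).canon ∘ g.canon) (((F t).canon ∘ g.canon)^[n] x)
          = (F t).toFun (g.canon (((F t).canon ∘ g.canon)^[n] x)) := by
            rw [Function.comp_apply, canon_eq hF hx₀ t]
        _ ≤ (F t).toFun (g.canon (((F t').canon ∘ g.canon)^[n] x)) := (F t).strictMono.monotone hg1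
        _ ≤ (F t').toFun (g.canon (((F t').canon ∘ g.canon)^[n] x)) := Fmono hF hx₀ h _
        _ = ((F t').canon ∘ g.canon) (((F t').canon ∘ g.canon)^[n] x) := by
            rw [Function.comp_apply, canon_eq hF hx₀ t']
  show ((F t).canon ∘ g.canon)^[g.q] x - x - (g.p:ℝ) ≤ ((F t').canon ∘ g.canon)^[g.q] x - x - (g.p:ℝ)
  linarith [key g.q]

theorem delta_cont (t : ℝ) : Continuous fun x => delta F g x t := by
  have h1 : Continuous ((F t).canon ∘ g.canon) := by
    apply Continuous.comp
    · show Continuous fun y => (F t).toFun y - ((⌊(F t).transNum⌋:ℤ):ℝ)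
      exact (H.cont (F t)).sub continuous_const
    · show Continuous fun y => g.toFun y - ((⌊g.transNum⌋:ℤ):ℝ)
      exact (H.cont g).sub continuous_const
  have h2 : Continuous (((F t).canon ∘ g.canon))^[g.q] := h1.iterate g.q
  show Continuous fun x => ((F t).canon ∘ g.canon)^[g.q] x - x - (g.p:ℝ)
  exact ((h2.sub continuous_id).sub continuous_const)

theorem delta_int (x t : ℝ) (k : ℤ) : delta F g (x + (k:ℝ)) t = delta F g x t := by
  have hcomm : ∀ y : ℝ, ((F t).canon ∘ g.canon) (y + (k:ℝ)) = ((F t).canon ∘ g.canon) y + (k:ℝ) := by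
    intro y
    have h1 : g.canon (y + (k:ℝ)) = g.canon y + (k:ℝ) := by
      show g.toFun (y + (k:ℝ)) - ((⌊g.transNum⌋:ℤ):ℝ) = g.toFun y - ((⌊g.transNum⌋:ℤ):ℝ) + (k:ℝ)
      rw [H.map_add_int g y k]; ring
    show (F t).canon (g.canon (y + (k:ℝ))) = (F t).canon (g.canon y) + (k:ℝ)
    rw [h1]
    show (F t).toFun (g.canon y + (k:ℝ)) - ((⌊(F t).transNum⌋:ℤ):ℝ)
        = (F t).toFun (g.canon y) - ((⌊(F t).transNum⌋:ℤ):ℝ) + (k:ℝ)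
    rw [H.map_add_int (F t) _ k]; ring
  have hiter : ∀ (n : ℕ) (y : ℝ), ((F t).canon ∘ g.canon)^[n] (y + (k:ℝ))
      = ((F t).canon ∘ g.canon)^[n] y + (k:ℝ) := by
    intro n
    induction n with
    | zero => intro y; simp
    | succ n ih =>
      intro y
      rw [Function.iterate_succ_apply, hcomm y, ih, Function.iterate_succ_apply]
  show ((F t).canon ∘ g.canon)^[g.q] (x + (k:ℝ)) - (x + (k:ℝ)) - (g.p:ℝ)
      = ((F t).canon ∘ g.canon)^[g.q] x - x - (g.p:ℝ)
  rw [hiter g.q x]; ring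

theorem delta_ray (hF : PosFamily f F) (hx₀ : x₀ ∈ frontier f.Per) {r : ℚ}
    (hg : g.transNum = (r:ℝ)) {x t₁ : ℝ} (h1 : delta F g x t₁ = 0)
    (h2 : delta F g x (t₁ + 1) = 0) (s : ℝ) : delta F g x s = 0 := by
  have hq1 : 1 ≤ g.q := by rw [q_eq g r hg]; exact r.pos
  set C : ℝ → ℝ → ℝ := fun u y => (F u).toFun (g.canon y) with hC
  have hCdef : ∀ u : ℝ, ((F u).canon ∘ g.canon) = C u := by
    intro u; funext y
    show (F u).canon (g.canon y) = (F u).toFun (g.canon y)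
    rw [canon_eq hF hx₀ u]
  have hdelta : ∀ u : ℝ, delta F g x u = (C u)^[g.q] x - x - (g.p : ℝ) := by
    intro u
    show ((F u).canon ∘ g.canon)^[g.q] x - x - (g.p:ℝ) = _
    rw [hCdef u]
  set a : ℕ → ℝ := fun k => (C t₁)^[k] x with ha
  set b : ℕ → ℝ := fun k => (C (t₁+1))^[k] x with hb
  have hsucc : ∀ y, C (t₁+1) y = (F 1).toFun (C t₁ y) := by
    intro y
    show (F (t₁+1)).toFun (g.canon y) = (F 1).toFun ((F t₁).toFun (g.canon y))
    rw [show t₁ + 1 = 1 + t₁ by ring, Fadd hF]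
  have hCmono : ∀ u, StrictMono (C u) := by
    intro u y z hyz
    apply (F u).strictMono
    show g.toFun y - ((⌊g.transNum⌋:ℤ):ℝ) < g.toFun z - ((⌊g.transNum⌋:ℤ):ℝ)
    have := g.strictMono hyz; linarith
  have hastep : ∀ k, a (k+1) = C t₁ (a k) := fun k => Function.iterate_succ_apply' _ _ _
  have hbstep : ∀ k, b (k+1) = C (t₁+1) (b k) := fun k => Function.iterate_succ_apply' _ _ _
  have hab : ∀ k, a k ≤ b k := by
    intro k; induction k with
    | zero => exact le_refl x
    | succ k ih =>
      rw [hastep, hbstep]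
      calc C t₁ (a k) ≤ C t₁ (b k) := (hCmono t₁).monotone ih
      _ ≤ (F 1).toFun (C t₁ (b k)) := Fge hF hx₀ zero_le_one _
      _ = C (t₁+1) (b k) := (hsucc _).symm
  have hstrict : ∀ k, a k < b k → a (k+1) < b (k+1) := by
    intro k hk
    rw [hastep, hbstep]
    calc C t₁ (a k) < C t₁ (b k) := hCmono t₁ hk
    _ ≤ (F 1).toFun (C t₁ (b k)) := Fge hF hx₀ zero_le_one _
    _ = C (t₁+1) (b k) := (hsucc _).symm
  have hprop : ∀ j k, a k < b k → a (k+j) < b (k+j) := by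
    intro j
    induction j with
    | zero => intro k hk; simpa using hk
    | succ j ih =>
      intro k hk
      have := hstrict _ (ih k hk)
      rw [show k + (j+1) = (k+j)+1 from by omega]
      exact this
  have haqv : a g.q = x + (g.p:ℝ) := by
    have h3 := hdelta t₁
    rw [h1] at h3
    show (C t₁)^[g.q] x = x + (g.p:ℝ)
    linarith
  have hbqv : b g.q = x + (g.p:ℝ) := by
    have h3 := hdelta (t₁+1)
    rw [h2] at h3
    show (C (t₁+1))^[g.q] x = x + (g.p:ℝ)
    linarith
  have hall : ∀ k, k ≤ g.q → a k = b k := by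
    intro k hk
    apply le_antisymm (hab k)
    by_contra hlt
    push_neg at hlt
    have hlt' : a k < b k := lt_of_le_of_ne (hab k) (by intro he; rw [he] at hlt; exact absurd le_rfl (not_le.2 hlt))
    have := hprop (g.q - k) k hlt'
    rw [show k + (g.q - k) = g.q from by omega] at this
    rw [haqv, hbqv] at this
    exact absurd this (lt_irrefl _)
  have hfr : ∀ k, k < g.q → a (k+1) ∈ frontier f.Per := by
    intro k hk
    have e1 : a (k+1) = b (k+1) := hall (k+1) (by omega)
    have e2 : a k = b k := hall k (by omega)
    have e3 : b (k+1) = (F 1).toFun (a (k+1)) := by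
      rw [hbstep, ← e2, hsucc, ← hastep]
    have e4 : (F 1).toFun (a (k+1)) = a (k+1) := by rw [← e3, e1]
    exact (Ffr_iff hF hx₀ one_ne_zero).1 e4
  have claim2 : ∀ k, 1 ≤ k → k ≤ g.q → ∀ u, (C u)^[k] x = a k := by
    intro k hk1
    induction k, hk1 using Nat.le_induction with
    | base =>
      intro hkq u
      have hfr1 : a 1 ∈ frontier f.Per := by
        have := hfr 0 (by omega)
        simpa using this
      have ha1 : a 1 = (F t₁).toFun (g.canon x) := by
        rw [show (1:ℕ) = 0 + 1 from rfl, hastep]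
        simp [ha]; rfl
      have hgx : g.canon x ∈ frontier f.Per := by
        apply Ffr_pre hF hx₀ t₁
        rw [← ha1]; exact hfr1
      have ha1' : a 1 = g.canon x := by rw [ha1, Ffr hF hx₀ t₁ hgx]
      show (C u)^[1] x = a 1
      rw [Function.iterate_one]
      show (F u).toFun (g.canon x) = a 1
      rw [Ffr hF hx₀ u hgx, ha1']
    | succ k hk ih =>
      intro hkq u
      have ihk := ih (by omega)
      have hfrk : a (k+1) ∈ frontier f.Per := hfr k (by omega)
      have hak : a (k+1) = (F t₁).toFun (g.canon (a k)) := by rw [hastep]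
      have hgak : g.canon (a k) ∈ frontier f.Per := by
        apply Ffr_pre hF hx₀ t₁
        rw [← hak]; exact hfrk
      have hak' : a (k+1) = g.canon (a k) := by rw [hak, Ffr hF hx₀ t₁ hgak]
      rw [Function.iterate_succ_apply']
      rw [ihk u]
      show (F u).toFun (g.canon (a k)) = a (k+1)
      rw [Ffr hF hx₀ u hgak, hak']
  rw [hdelta s, claim2 g.q hq1 le_rfl s, haqv]
  ring

end Family

end StmtAux

namespace StmtAux

section Empty

variable {f g : HomeoZR} {F : ℝ → HomeoZR}

theorem EA0 (hF : PosFamily f F) : (F 0).transNum = 0 := by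
  have h : (F 0).toLift 0 = 0 + ((0:ℤ):ℝ) := by
    show (F 0).toFun 0 = 0 + ((0:ℤ):ℝ)
    rw [F0 hF]; norm_num
  have := (F 0).toLift.translationNumber_of_eq_add_int h
  simpa [HomeoZR.transNum] using this

theorem EAadd (hF : PosFamily f F) (s t : ℝ) :
    (F (s + t)).transNum = (F s).transNum + (F t).transNum := by
  have hmul : ∀ u v : ℝ, (F (u + v)).toLift = (F u).toLift * (F v).toLift := by
    intro u v
    apply CircleDeg1Lift.ext; intro x
    show (F (u + v)).toFun x = (F u).toFun ((F v).toFun x)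
    exact Fadd hF u v x
  have hcomm : Commute (F s).toLift (F t).toLift := by
    show _ * _ = _ * _
    rw [← hmul s t, ← hmul t s, add_comm]
  show ((F (s+t)).toLift).translationNumber = _
  rw [hmul s t]
  exact translationNumber_mul_of_commute hcomm

theorem EAnotint (hF : PosFamily f F) (hfr : frontier f.Per = ∅) {t : ℝ} (ht : t ≠ 0) (m : ℤ) :
    (F t).transNum ≠ (m:ℝ) := by
  intro h
  obtain ⟨x, hx⟩ := ((F t).toLift.translationNumber_eq_int_iff (H.cont (F t))).1 h
  have hm : x ∈ (F t).FixS := ⟨m, hx⟩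
  rw [hF.2.2.1 t ht, hfr] at hm
  exact hm

theorem EAne0 (hF : PosFamily f F) (hfr : frontier f.Per = ∅) {t : ℝ} (ht : t ≠ 0) :
    (F t).transNum ≠ 0 := by
  have := EAnotint hF hfr ht 0
  simpa using this

theorem EAneg (hF : PosFamily f F) (t : ℝ) : (F (-t)).transNum = -(F t).transNum := by
  have := EAadd hF t (-t)
  rw [show t + -t = 0 from by ring, EA0 hF] at this
  linarith

theorem EAinj (hF : PosFamily f F) (hfr : frontier f.Per = ∅) {u v : ℝ}
    (h : (F u).transNum = (F v).transNum) : u = v := by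
  by_contra hne
  have h1 : u - v ≠ 0 := sub_ne_zero.2 hne
  have h2 := EAadd hF (u - v) v
  rw [show u - v + v = u from by ring] at h2
  exact EAne0 hF hfr h1 (by linarith)

theorem EAnsmul (hF : PosFamily f F) (n : ℕ) (t : ℝ) :
    (F ((n:ℝ) * t)).transNum = (n:ℝ) * (F t).transNum := by
  induction n with
  | zero => simpa using EA0 hF
  | succ n ih =>
    have : ((n:ℝ) + 1) * t = (n:ℝ) * t + t := by ring
    push_cast
    rw [this, EAadd hF, ih]
    ring

theorem EAzsmul (hF : PosFamily f F) (k : ℤ) (t : ℝ) :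
    (F ((k:ℝ) * t)).transNum = (k:ℝ) * (F t).transNum := by
  rcases le_or_gt 0 k with hk | hk
  · obtain ⟨n, rfl⟩ : ∃ n : ℕ, k = (n:ℤ) := ⟨k.toNat, (Int.toNat_of_nonneg hk).symm⟩
    push_cast
    exact EAnsmul hF n t
  · obtain ⟨n, rfl⟩ : ∃ n : ℕ, k = -(n:ℤ) := ⟨(-k).toNat, by omega⟩
    push_cast
    rw [show -(n:ℝ) * t = -((n:ℝ) * t) from by ring, EAneg hF, EAnsmul hF]
    ring

theorem EAdisp (hF : PosFamily f F) (hfr : frontier f.Per = ∅) {t : ℝ} (ht : t ≠ 0) (x : ℝ) :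
    ((⌊(F t).transNum⌋:ℤ):ℝ) < (F t).toFun x - x ∧
      (F t).toFun x - x < ((⌊(F t).transNum⌋:ℤ):ℝ) + 1 := by
  set d := (F t).toFun x - x with hd
  have hdint : ∀ m : ℤ, d ≠ (m:ℝ) := by
    intro m hm
    have hx : x ∈ (F t).FixS := ⟨m, by rw [← hm, hd]; ring⟩
    rw [hF.2.2.1 t ht, hfr] at hx
    exact hx
  have h1 : ((⌊d⌋:ℤ):ℝ) ≤ (F t).transNum := (F t).toLift.floor_sub_le_translationNumber x
  have h2 : (F t).transNum ≤ ((⌈d⌉:ℤ):ℝ) := (F t).toLift.translationNumber_le_ceil_sub x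
  have hceil : (⌈d⌉:ℤ) ≤ ⌊d⌋ + 1 := Int.ceil_le_floor_add_one d
  have h3 : (F t).transNum ≠ ((⌊d⌋:ℤ):ℝ) := EAnotint hF hfr ht _
  have h4 : (F t).transNum ≠ ((⌊d⌋ + 1:ℤ):ℝ) := EAnotint hF hfr ht _
  have h5 : ((⌊d⌋:ℤ):ℝ) < (F t).transNum := lt_of_le_of_ne h1 (Ne.symm h3)
  have h6 : (F t).transNum < ((⌊d⌋:ℤ):ℝ) + 1 := by
    have hc : ((⌈d⌉:ℤ):ℝ) ≤ ((⌊d⌋ + 1 : ℤ):ℝ) := by exact_mod_cast hceil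
    have : (F t).transNum ≤ ((⌊d⌋ + 1 : ℤ):ℝ) := le_trans h2 hc
    have h7 : (F t).transNum < ((⌊d⌋ + 1 : ℤ):ℝ) := lt_of_le_of_ne this h4
    push_cast at h7 ⊢
    linarith
  have hfl : ⌊(F t).transNum⌋ = ⌊d⌋ := by
    apply Int.floor_eq_iff.2
    exact ⟨h5.le, by push_cast; push_cast at h6; linarith⟩
  constructor
  · rw [hfl]
    exact lt_of_le_of_ne (Int.floor_le d) (Ne.symm (hdint _))
  · rw [hfl]
    have := Int.lt_floor_add_one d
    push_cast at this ⊢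
    linarith

theorem EAord (hF : PosFamily f F) (hfr : frontier f.Per = ∅) {s t : ℝ}
    (hst : (F s).transNum < (F t).transNum) (x : ℝ) : (F s).toFun x < (F t).toFun x := by
  have hadd := EAadd hF (t - s) s
  rw [show t - s + s = t from by ring] at hadd
  have ha : 0 < (F (t - s)).transNum := by linarith
  have hts : t - s ≠ 0 := by
    intro h
    rw [h, EA0 hF] at ha
    exact lt_irrefl _ ha
  have hfloor : (0:ℤ) ≤ ⌊(F (t - s)).transNum⌋ := Int.floor_nonneg.2 ha.le
  have hdisp := (EAdisp hF hfr hts ((F s).toFun x)).1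
  have hlt : (F s).toFun x < (F (t - s)).toFun ((F s).toFun x) := by
    have hc : (0:ℝ) ≤ ((⌊(F (t - s)).transNum⌋:ℤ):ℝ) := by exact_mod_cast hfloor
    linarith
  calc (F s).toFun x < (F (t - s)).toFun ((F s).toFun x) := hlt
  _ = (F t).toFun x := by rw [← Fadd hF, show t - s + s = t from by ring]

theorem EAunbdd_above (hF : PosFamily f F) (hfr : frontier f.Per = ∅) (c : ℝ) :
    ∃ t : ℝ, c < (F t).transNum := by
  have h1 : (F 1).transNum ≠ 0 := EAne0 hF hfr one_ne_zero
  obtain ⟨n, hn⟩ := exists_nat_gt (c / |(F 1).transNum|)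
  rcases lt_or_gt_of_ne h1 with hneg | hpos
  · refine ⟨(n:ℝ) * (-1), ?_⟩
    have := EAnsmul hF n (-1)
    rw [this, EAneg hF]
    have habs : |(F 1).transNum| = -(F 1).transNum := abs_of_neg hneg
    have hpos' : 0 < |(F 1).transNum| := abs_pos.2 h1
    have := (div_lt_iff₀ hpos').1 hn
    nlinarith [habs]
  · refine ⟨(n:ℝ) * 1, ?_⟩
    have := EAnsmul hF n 1
    rw [this]
    have habs : |(F 1).transNum| = (F 1).transNum := abs_of_pos hpos
    have hpos' : 0 < |(F 1).transNum| := abs_pos.2 h1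
    have := (div_lt_iff₀ hpos').1 hn
    nlinarith [habs]

theorem EAunbdd_below (hF : PosFamily f F) (hfr : frontier f.Per = ∅) (c : ℝ) :
    ∃ t : ℝ, (F t).transNum < c := by
  obtain ⟨t, ht⟩ := EAunbdd_above hF hfr (-c)
  exact ⟨-t, by rw [EAneg hF]; linarith⟩

theorem EAdense (hF : PosFamily f F) (hfr : frontier f.Per = ∅) :
    Dense (Set.range fun t => (F t).transNum) := by
  intro c
  rw [Metric.mem_closure_iff]
  intro ε hε
  set α := (F 1).transNum with hα
  have hα0 : α ≠ 0 := EAne0 hF hfr one_ne_zero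
  have hαpos : 0 < |α| := abs_pos.2 hα0
  obtain ⟨j, hj⟩ := pow_unbounded_of_one_lt (|α| / ε) (by norm_num : (1:ℝ) < 2)
  have h2j : (0:ℝ) < 2^j := by positivity
  set s₀ := |α| / 2^j with hs₀
  have hs₀pos : 0 < s₀ := by positivity
  have hs₀lt : s₀ < ε := by
    rw [hs₀, div_lt_iff₀ h2j]
    have := (div_lt_iff₀ hε).1 hj
    nlinarith
  have hsmall : (F ((1:ℝ)/2^j)).transNum = α / 2^j := by
    have := EAnsmul hF (2^j) ((1:ℝ)/2^j)
    rw [show ((2^j : ℕ):ℝ) * ((1:ℝ)/2^j) = 1 from by push_cast; field_simp] at this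
    have h2 : ((2^j : ℕ):ℝ) ≠ 0 := by positivity
    rw [← hα] at this
    field_simp at this ⊢
    push_cast at this ⊢
    linarith
  have hmem : ∀ k : ℤ, ∃ t : ℝ, (F t).transNum = (k:ℝ) * s₀ := by
    intro k
    rcases abs_cases α with ⟨habs, _⟩ | ⟨habs, _⟩
    · refine ⟨(k:ℝ) * ((1:ℝ)/2^j), ?_⟩
      rw [EAzsmul hF, hsmall, hs₀, habs]
    · refine ⟨(-k:ℝ) * ((1:ℝ)/2^j), ?_⟩
      rw [show (-k:ℝ) = ((-k:ℤ):ℝ) from by push_cast; ring, EAzsmul hF, hsmall, hs₀, habs]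
      push_cast
      ring
  obtain ⟨t, ht⟩ := hmem ⌊c / s₀⌋
  refine ⟨(F t).transNum, ⟨t, rfl⟩, ?_⟩
  rw [ht, Real.dist_eq]
  have h1 : (⌊c / s₀⌋ : ℝ) ≤ c / s₀ := Int.floor_le _
  have h2 : c / s₀ < ⌊c / s₀⌋ + 1 := Int.lt_floor_add_one _
  have hc : c / s₀ * s₀ = c := div_mul_cancel₀ c hs₀pos.ne'
  have h3 : (⌊c / s₀⌋:ℝ) * s₀ ≤ c := by
    nlinarith [mul_le_mul_of_nonneg_right h1 hs₀pos.le]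
  have h4 : c < (⌊c / s₀⌋:ℝ) * s₀ + s₀ := by
    nlinarith [mul_le_mul_of_nonneg_right h2.le hs₀pos.le]
  rw [abs_lt]
  constructor <;> nlinarith

variable (F) in
/-- orbit sup function -/
noncomputable def HS (c : ℝ) : ℝ := sSup ((fun t => (F t).toFun 0) '' {t | (F t).transNum < c})

variable (F) in
/-- orbit inf function -/
noncomputable def RI (c : ℝ) : ℝ := sInf ((fun t => (F t).toFun 0) '' {t | c < (F t).transNum})

theorem Sne (hF : PosFamily f F) (hfr : frontier f.Per = ∅) (c : ℝ) :
    ((fun t => (F t).toFun 0) '' {t | (F t).transNum < c}).Nonempty := by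
  obtain ⟨t, ht⟩ := EAunbdd_below hF hfr c
  exact ⟨(F t).toFun 0, t, ht, rfl⟩

theorem Sbdd (hF : PosFamily f F) (hfr : frontier f.Per = ∅) (c : ℝ) :
    BddAbove ((fun t => (F t).toFun 0) '' {t | (F t).transNum < c}) := by
  obtain ⟨t', ht'⟩ := EAunbdd_above hF hfr c
  refine ⟨(F t').toFun 0, ?_⟩
  rintro y ⟨u, hu, rfl⟩
  simp only [Set.mem_setOf_eq] at hu
  exact (EAord hF hfr (lt_trans hu ht') 0).le

theorem Rne (hF : PosFamily f F) (hfr : frontier f.Per = ∅) (c : ℝ) :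
    ((fun t => (F t).toFun 0) '' {t | c < (F t).transNum}).Nonempty := by
  obtain ⟨t, ht⟩ := EAunbdd_above hF hfr c
  exact ⟨(F t).toFun 0, t, ht, rfl⟩

theorem Rbdd (hF : PosFamily f F) (hfr : frontier f.Per = ∅) (c : ℝ) :
    BddBelow ((fun t => (F t).toFun 0) '' {t | c < (F t).transNum}) := by
  obtain ⟨t', ht'⟩ := EAunbdd_below hF hfr c
  refine ⟨(F t').toFun 0, ?_⟩
  rintro y ⟨u, hu, rfl⟩
  simp only [Set.mem_setOf_eq] at hu
  exact (EAord hF hfr (lt_trans ht' hu) 0).le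

theorem HSle (hF : PosFamily f F) (hfr : frontier f.Per = ∅) {u : ℝ} {c : ℝ}
    (h : (F u).transNum < c) : (F u).toFun 0 ≤ HS F c :=
  le_csSup (Sbdd hF hfr c) ⟨u, h, rfl⟩

theorem HSub (hF : PosFamily f F) (hfr : frontier f.Per = ∅) {c : ℝ} {t' : ℝ}
    (h : c ≤ (F t').transNum) : HS F c ≤ (F t').toFun 0 := by
  apply csSup_le (Sne hF hfr c)
  rintro y ⟨u, hu, rfl⟩
  simp only [Set.mem_setOf_eq] at hu
  exact (EAord hF hfr (lt_of_lt_of_le hu h) 0).le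

theorem RIle (hF : PosFamily f F) (hfr : frontier f.Per = ∅) {u : ℝ} {c : ℝ}
    (h : c < (F u).transNum) : RI F c ≤ (F u).toFun 0 :=
  csInf_le (Rbdd hF hfr c) ⟨u, h, rfl⟩

theorem HSRI (hF : PosFamily f F) (hfr : frontier f.Per = ∅) (c : ℝ) : HS F c ≤ RI F c := by
  apply csSup_le (Sne hF hfr c)
  rintro y ⟨u, hu, rfl⟩
  simp only [Set.mem_setOf_eq] at hu
  apply le_csInf (Rne hF hfr c)
  rintro z ⟨v, hv, rfl⟩
  simp only [Set.mem_setOf_eq] at hv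
  exact (EAord hF hfr (lt_trans hu hv) 0).le

theorem HSmono (hF : PosFamily f F) (hfr : frontier f.Per = ∅) : Monotone (HS F) := by
  intro c c' hcc
  apply csSup_le_csSup (Sbdd hF hfr c') (Sne hF hfr c)
  rintro y ⟨u, hu, rfl⟩
  simp only [Set.mem_setOf_eq] at hu
  exact ⟨u, lt_of_lt_of_le hu hcc, rfl⟩

theorem Simg (hF : PosFamily f F) (s c : ℝ) :
    (fun t => (F t).toFun 0) '' {t | (F t).transNum < c + (F s).transNum}
      = (F s).toFun '' ((fun t => (F t).toFun 0) '' {t | (F t).transNum < c}) := by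
  ext y
  constructor
  · rintro ⟨u, hu, rfl⟩
    simp only [Set.mem_setOf_eq] at hu
    refine ⟨(F (u - s)).toFun 0, ⟨u - s, ?_, rfl⟩, ?_⟩
    · have h1 := EAadd hF (u - s) s
      rw [show u - s + s = u from by ring] at h1
      simp only [Set.mem_setOf_eq]
      linarith
    · rw [← Fadd hF, show s + (u - s) = u from by ring]
  · rintro ⟨y', ⟨u, hu, rfl⟩, rfl⟩
    simp only [Set.mem_setOf_eq] at hu
    refine ⟨s + u, ?_, ?_⟩
    · simp only [Set.mem_setOf_eq]
      rw [EAadd hF]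
      linarith
    · show (F (s + u)).toFun 0 = (F s).toFun ((F u).toFun 0)
      rw [Fadd hF]

theorem Rimg (hF : PosFamily f F) (s c : ℝ) :
    (fun t => (F t).toFun 0) '' {t | c + (F s).transNum < (F t).transNum}
      = (F s).toFun '' ((fun t => (F t).toFun 0) '' {t | c < (F t).transNum}) := by
  ext y
  constructor
  · rintro ⟨u, hu, rfl⟩
    simp only [Set.mem_setOf_eq] at hu
    refine ⟨(F (u - s)).toFun 0, ⟨u - s, ?_, rfl⟩, ?_⟩
    · have h1 := EAadd hF (u - s) s
      rw [show u - s + s = u from by ring] at h1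
      simp only [Set.mem_setOf_eq]
      linarith
    · rw [← Fadd hF, show s + (u - s) = u from by ring]
  · rintro ⟨y', ⟨u, hu, rfl⟩, rfl⟩
    simp only [Set.mem_setOf_eq] at hu
    refine ⟨s + u, ?_, ?_⟩
    · simp only [Set.mem_setOf_eq]
      rw [EAadd hF]
      linarith
    · show (F (s + u)).toFun 0 = (F s).toFun ((F u).toFun 0)
      rw [Fadd hF]

theorem HSconj (hF : PosFamily f F) (hfr : frontier f.Per = ∅) (s c : ℝ) :
    (F s).toFun (HS F c) = HS F (c + (F s).transNum) := by
  show (F s).toFun (sSup _) = sSup _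
  rw [Monotone.map_csSup_of_continuousAt (H.cont (F s)).continuousAt
    (F s).strictMono.monotone (Sne hF hfr c) (Sbdd hF hfr c), Simg hF s c]

theorem RIconj (hF : PosFamily f F) (hfr : frontier f.Per = ∅) (s c : ℝ) :
    (F s).toFun (RI F c) = RI F (c + (F s).transNum) := by
  show (F s).toFun (sInf _) = sInf _
  rw [Monotone.map_csInf_of_continuousAt (H.cont (F s)).continuousAt
    (F s).strictMono.monotone (Rne hF hfr c) (Rbdd hF hfr c), Rimg hF s c]

theorem HSnoJ (hF : PosFamily f F) (hfr : frontier f.Per = ∅) (t : ℝ) :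
    HS F ((F t).transNum) = (F t).toFun 0 := by
  have hle : ∀ u : ℝ, HS F ((F u).transNum) ≤ (F u).toFun 0 := fun u => HSub hF hfr le_rfl
  by_contra hne
  have hJt : HS F ((F t).transNum) < (F t).toFun 0 := lt_of_le_of_ne (hle t) hne
  have hprop : ∀ u : ℝ, HS F ((F u).transNum) < (F u).toFun 0 := by
    intro u
    have h1 : (F u).transNum = (F t).transNum + (F (u - t)).transNum := by
      have := EAadd hF t (u - t)
      rw [show t + (u - t) = u from by ring] at this
      exact this
    have h2 : (F u).toFun 0 = (F (u - t)).toFun ((F t).toFun 0) := by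
      rw [← Fadd hF, show u - t + t = u from by ring]
    have h3 : (F t).transNum + (F (u - t)).transNum
        = (F t).transNum + (F (u-t)).transNum := rfl
    rw [h1, ← HSconj hF hfr (u - t) ((F t).transNum)]
    rw [h2]
    exact (F (u - t)).strictMono hJt
  have hQ : ∀ u : ℝ, ∃ q : ℚ, HS F ((F u).transNum) < (q:ℝ) ∧ (q:ℝ) < (F u).toFun 0 := fun u =>
    exists_rat_btwn (hprop u)
  choose Q hQ1 hQ2 using hQ
  have hQinj : Function.Injective Q := by
    intro u v huv
    by_contra hne2
    have hc : ((Q u : ℚ):ℝ) = ((Q v : ℚ):ℝ) := by rw [huv]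
    rcases lt_trichotomy ((F u).transNum) ((F v).transNum) with h | h | h
    · have hm : (F u).toFun 0 ≤ HS F ((F v).transNum) := HSle hF hfr h
      linarith [hQ2 u, hQ1 v]
    · exact hne2 (EAinj hF hfr h)
    · have hm : (F v).toFun 0 ≤ HS F ((F u).transNum) := HSle hF hfr h
      linarith [hQ2 v, hQ1 u]
  have hcnt : Countable ℝ := hQinj.countable
  exact absurd (@Set.countable_univ ℝ hcnt) Cardinal.not_countable_real

theorem HSGap (hF : PosFamily f F) (hfr : frontier f.Per = ∅) (c₀ : ℝ) : RI F c₀ = HS F c₀ := by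
  refine le_antisymm ?_ (HSRI hF hfr c₀)
  by_contra hne
  push_neg at hne
  have hprop : ∀ s : ℝ, HS F (c₀ + (F s).transNum) < RI F (c₀ + (F s).transNum) := by
    intro s
    rw [← HSconj hF hfr s c₀, ← RIconj hF hfr s c₀]
    exact (F s).strictMono hne
  have hQ : ∀ s : ℝ, ∃ q : ℚ, HS F (c₀ + (F s).transNum) < (q:ℝ) ∧
      (q:ℝ) < RI F (c₀ + (F s).transNum) := fun s => exists_rat_btwn (hprop s)
  choose Q hQ1 hQ2 using hQ
  have horder : ∀ s s' : ℝ, (F s).transNum < (F s').transNum →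
      RI F (c₀ + (F s).transNum) ≤ HS F (c₀ + (F s').transNum) := by
    intro s s' hss
    obtain ⟨x, ⟨t, rfl⟩, hx⟩ := (EAdense hF hfr).exists_between
      (show c₀ + (F s).transNum < c₀ + (F s').transNum from by linarith)
    calc RI F (c₀ + (F s).transNum) ≤ (F t).toFun 0 := RIle hF hfr hx.1
    _ ≤ HS F (c₀ + (F s').transNum) := HSle hF hfr hx.2
  have hQinj : Function.Injective Q := by
    intro u v huv
    by_contra hne2
    have hc : ((Q u : ℚ):ℝ) = ((Q v : ℚ):ℝ) := by rw [huv]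
    rcases lt_trichotomy ((F u).transNum) ((F v).transNum) with h | h | h
    · have := horder u v h
      linarith [hQ2 u, hQ1 v]
    · exact hne2 (EAinj hF hfr h)
    · have := horder v u h
      linarith [hQ2 v, hQ1 u]
  have hcnt : Countable ℝ := hQinj.countable
  exact absurd (@Set.countable_univ ℝ hcnt) Cardinal.not_countable_real

theorem HScont (hF : PosFamily f F) (hfr : frontier f.Per = ∅) : Continuous (HS F) := by
  rw [continuous_iff_continuousAt]
  intro c₀
  rw [Metric.continuousAt_iff]
  intro ε hε
  obtain ⟨y, hy_mem, hy⟩ := exists_lt_of_csInf_lt (Rne hF hfr c₀)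
    (show RI F c₀ < HS F c₀ + ε from by rw [HSGap hF hfr c₀]; linarith)
  obtain ⟨u, hu, rfl⟩ := hy_mem
  simp only [Set.mem_setOf_eq] at hu
  obtain ⟨z, hz_mem, hz⟩ := exists_lt_of_lt_csSup (Sne hF hfr c₀)
    (show HS F c₀ - ε < HS F c₀ from by linarith)
  obtain ⟨v, hv, rfl⟩ := hz_mem
  simp only [Set.mem_setOf_eq] at hv
  refine ⟨min ((F u).transNum - c₀) (c₀ - (F v).transNum), lt_min (by linarith) (by linarith), ?_⟩
  intro c hc
  rw [Real.dist_eq] at hc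
  have hc1 : c < (F u).transNum := by
    have := (abs_lt.1 (lt_of_lt_of_le hc (min_le_left _ _))).2
    linarith
  have hc2 : (F v).transNum < c := by
    have := (abs_lt.1 (lt_of_lt_of_le hc (min_le_right _ _))).1
    linarith
  have hub : HS F c ≤ (F u).toFun 0 := HSub hF hfr hc1.le
  have hlb : (F v).toFun 0 ≤ HS F c := HSle hF hfr hc2
  rw [Real.dist_eq, abs_lt]
  constructor <;> linarith

theorem HSstrict (hF : PosFamily f F) (hfr : frontier f.Per = ∅) : StrictMono (HS F) := by
  intro c c' hcc
  obtain ⟨x1, ⟨u, rfl⟩, hx1⟩ := (EAdense hF hfr).exists_between hcc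
  obtain ⟨x2, ⟨u', rfl⟩, hx2⟩ := (EAdense hF hfr).exists_between hx1.2
  calc HS F c ≤ (F u).toFun 0 := HSub hF hfr hx1.1.le
  _ < (F u').toFun 0 := EAord hF hfr hx2.1 0
  _ ≤ HS F c' := HSle hF hfr hx2.2

theorem HSsurj (hF : PosFamily f F) (hfr : frontier f.Per = ∅) :
    Function.Surjective (HS F) := by
  apply Continuous.surjective (HScont hF hfr)
  · apply tendsto_atTop_atTop_of_monotone (HSmono hF hfr)
    intro b
    obtain ⟨t, ht⟩ := EAunbdd_above hF hfr (b + 1)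
    refine ⟨(F t).transNum, ?_⟩
    rw [HSnoJ hF hfr t]
    rcases eq_or_ne t 0 with rfl | ht0
    · rw [EA0 hF] at ht
      rw [F0 hF]
      linarith
    · have hd := (EAdisp hF hfr ht0 0).1
      have hfl : (F t).transNum - 1 ≤ ((⌊(F t).transNum⌋:ℤ):ℝ) := by
        have := Int.lt_floor_add_one ((F t).transNum)
        push_cast at this ⊢
        linarith
      push_cast at hd hfl
      linarith
  · apply tendsto_atBot_atBot_of_monotone (HSmono hF hfr)
    intro b
    obtain ⟨t, ht⟩ := EAunbdd_below hF hfr (b - 1)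
    refine ⟨(F t).transNum, ?_⟩
    rw [HSnoJ hF hfr t]
    rcases eq_or_ne t 0 with rfl | ht0
    · rw [EA0 hF] at ht
      rw [F0 hF]
      linarith
    · have hd := (EAdisp hF hfr ht0 0).2
      have hfl : ((⌊(F t).transNum⌋:ℤ):ℝ) ≤ (F t).transNum := Int.floor_le _
      push_cast at hd hfl
      linarith

theorem empty_case {f g : HomeoZR} {F : ℝ → HomeoZR} (hf : RatRot f) (hg : RatRot g)
    (hF : PosFamily f F)
    (hconst : ∀ t : ℝ, ∃ m : ℤ, ((F t).comp g).transNum = g.transNum + m)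
    (hfr : frontier f.Per = ∅) : False := by
  set E : ℝ ≃o ℝ := StrictMono.orderIsoOfSurjective (HS F) (HSstrict hF hfr) (HSsurj hF hfr)
    with hE
  have hEcoe : ∀ c, E c = HS F c := fun c => rfl
  have hEsy : ∀ y, HS F (E.symm y) = y := fun y => by
    rw [← hEcoe]; exact E.apply_symm_apply y
  have hEsymm_cont : Continuous E.symm := OrderIso.continuous E.symm
  have hHSinj : Function.Injective (HS F) := (HSstrict hF hfr).injective
  set θ : ℝ → ℝ := fun c => E.symm (HS F c + 1) with hθ
  have hθspec : ∀ c, HS F (θ c) = HS F c + 1 := fun c => hEsy _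
  have hθadd : ∀ c s, θ (c + (F s).transNum) = θ c + (F s).transNum := by
    intro c s
    apply hHSinj
    rw [hθspec, ← HSconj hF hfr s c, ← HSconj hF hfr s (θ c), hθspec]
    exact ((F s).map_add_one (HS F c)).symm
  have hθcont : Continuous θ := hEsymm_cont.comp ((HScont hF hfr).add continuous_const)
  have hdconst : ∀ c, θ c - c = θ 0 := by
    intro c
    have hsub : Set.range (fun t => (F t).transNum) ⊆ {c | θ c - c = θ 0} := by
      rintro x ⟨s, rfl⟩
      have h1 := hθadd 0 s
      rw [zero_add] at h1
      simp only [Set.mem_setOf_eq, h1]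
      ring
    have hclosed : IsClosed {c | θ c - c = θ 0} :=
      isClosed_eq (hθcont.sub continuous_id) continuous_const
    have huniv : (Set.univ : Set ℝ) ⊆ {c | θ c - c = θ 0} := by
      rw [← hclosed.closure_eq]
      intro x _
      exact closure_mono hsub ((EAdense hF hfr) x)
    exact huniv (Set.mem_univ c)
  set δ := θ 0 with hδ
  have hθeq : ∀ c, θ c = c + δ := fun c => by have := hdconst c; linarith
  have hkey : ∀ c, HS F (c + δ) = HS F c + 1 := fun c => by rw [← hθeq c]; exact hθspec c
  have hδpos : 0 < δ := by
    have h1 := hkey 0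
    rw [zero_add] at h1
    have h2 : HS F 0 < HS F δ := by rw [h1]; linarith
    exact (HSstrict hF hfr).lt_iff_lt.1 h2
  have hkey' : ∀ c, HS F (c - δ) = HS F c - 1 := by
    intro c
    have := hkey (c - δ)
    rw [sub_add_cancel] at this
    linarith
  have hkeyZ : ∀ (k : ℤ) (c : ℝ), HS F (c + k * δ) = HS F c + k := by
    intro k
    induction k using Int.induction_on with
    | zero => intro c; simp
    | succ n ih =>
      intro c
      have he : c + ((n:ℤ)+1:ℤ) * δ = (c + (n:ℤ) * δ) + δ := by push_cast; ring
      rw [he, hkey, ih]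
      push_cast; ring
    | pred n ih =>
      intro c
      have he : c + (-(n:ℤ)-1:ℤ) * δ = (c + (-(n:ℤ):ℤ) * δ) - δ := by push_cast; ring
      rw [he, hkey', ih]
      push_cast; ring
  have hiter : ∀ (s : ℝ) (n : ℕ), ((F s).toLift ^ n) (HS F 0) = HS F (n * (F s).transNum) := by
    intro s n
    induction n with
    | zero => simp
    | succ n ih =>
      rw [pow_succ', mul_apply, ih]
      show (F s).toFun (HS F (n * (F s).transNum)) = _
      rw [HSconj hF hfr]
      push_cast
      ring_nf
  have hτδ : ∀ s : ℝ, (F s).transNum = (F s).transNum / δ := by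
    intro s
    have hten := (F s).toLift.tendsto_translationNumber (HS F 0)
    have hten2 : Tendsto (fun n : ℕ => (((F s).toLift ^ n) (HS F 0) - HS F 0) / n) atTop
        (𝓝 ((F s).transNum / δ)) := by
      rw [tendsto_iff_dist_tendsto_zero]
      apply squeeze_zero' (Filter.Eventually.of_forall fun n => dist_nonneg) ?_
        (tendsto_const_div_atTop_nhds_zero_nat 2)
      filter_upwards [Filter.eventually_ge_atTop 1] with n hn
      rw [hiter s n]
      set c := (n:ℝ) * (F s).transNum with hcdef
      set k := ⌊c / δ⌋ with hkdef
      have hcancel : c / δ * δ = c := div_mul_cancel₀ c hδpos.ne'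
      have hk2 : (k:ℝ) ≤ c/δ := Int.floor_le _
      have hk1 : c/δ < (k:ℝ) + 1 := Int.lt_floor_add_one _
      have hd1 : (k:ℝ) * δ ≤ c := by nlinarith [mul_le_mul_of_nonneg_right hk2 hδpos.le]
      have hd2 : c < ((k:ℝ)+1) * δ := by nlinarith
      have hm1 : HS F ((k:ℝ)*δ) ≤ HS F c := HSmono hF hfr (by linarith)
      have hm2 : HS F c ≤ HS F (((k:ℝ)+1)*δ) := HSmono hF hfr (by linarith)
      have he1 : HS F ((k:ℝ)*δ) = HS F 0 + k := by
        have := hkeyZ k 0; rw [zero_add] at this; exact this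
      have he2 : HS F (((k:ℝ)+1)*δ) = HS F 0 + k + 1 := by
        have := hkeyZ (k+1) 0
        rw [zero_add] at this
        push_cast at this ⊢
        linarith
      have hnpos : (0:ℝ) < n := by exact_mod_cast hn
      have hb1 : HS F c - HS F 0 - c/δ ≤ 2 := by linarith
      have hb2 : -(2:ℝ) ≤ HS F c - HS F 0 - c/δ := by linarith
      have hsplit : (HS F c - HS F 0)/(n:ℝ) - (F s).transNum/δ
          = (HS F c - HS F 0 - c/δ)/(n:ℝ) := by
        have hδ0 : δ ≠ 0 := hδpos.ne'
        have hn0 : (n:ℝ) ≠ 0 := hnpos.ne'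
        rw [hcdef, mul_div_assoc, sub_div, sub_div, mul_comm ((n:ℝ)) ((F s).transNum / δ),
          mul_div_assoc, div_self hn0, mul_one, ← sub_div]
      rw [Real.dist_eq, hsplit, abs_le]
      constructor
      · rw [neg_le, ← neg_div]
        apply div_le_div_of_nonneg_right (by linarith) hnpos.le
      · apply div_le_div_of_nonneg_right (by linarith) hnpos.le
    exact tendsto_nhds_unique hten hten2
  have hδ1 : δ = 1 := by
    have h1 := hτδ 1
    have h2 : (F 1).transNum ≠ 0 := EAne0 hF hfr one_ne_zero
    have h3 : (F 1).transNum * δ = (F 1).transNum := by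
      calc (F 1).transNum * δ = ((F 1).transNum / δ) * δ := by rw [← h1]
      _ = (F 1).transNum := div_mul_cancel₀ _ hδpos.ne'
    have h4 : (F 1).transNum * δ = (F 1).transNum * 1 := by rw [mul_one]; exact h3
    exact mul_left_cancel₀ h2 h4
  have hEsymm_add : ∀ y, E.symm (y + 1) = E.symm y + 1 := by
    intro y
    apply hHSinj
    rw [hEsy]
    have := hkey (E.symm y)
    rw [hδ1] at this
    rw [this, hEsy]
  have hΦmono : ∀ c : ℝ, Monotone fun y => HS F (E.symm y + c) := by
    intro c y z hyz
    have h1 : E.symm y ≤ E.symm z := E.symm.monotone hyz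
    exact HSmono hF hfr (by linarith)
  have hΦadd1 : ∀ (c y : ℝ), HS F (E.symm (y+1) + c) = HS F (E.symm y + c) + 1 := by
    intro c y
    rw [hEsymm_add y, show E.symm y + 1 + c = (E.symm y + c) + 1 from by ring]
    have := hkey (E.symm y + c)
    rw [hδ1] at this
    exact this
  set Φ : ℝ → CircleDeg1Lift := fun c => ⟨⟨fun y => HS F (E.symm y + c), hΦmono c⟩, hΦadd1 c⟩
    with hΦdef
  have hΦapp : ∀ c y, Φ c y = HS F (E.symm y + c) := fun c y => rfl
  have hΦas : ∀ s, Φ ((F s).transNum) = (F s).toLift := by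
    intro s
    apply CircleDeg1Lift.ext; intro y
    rw [hΦapp]
    show HS F (E.symm y + (F s).transNum) = (F s).toFun y
    conv_rhs => rw [← hEsy y]
    exact (HSconj hF hfr s (E.symm y)).symm
  set U : ℝ → ℝ := fun c => (Φ c * g.toLift).translationNumber with hU
  have hUdense : ∀ s : ℝ, ∃ m : ℤ, U ((F s).transNum) = g.transNum + m := by
    intro s
    obtain ⟨m, hm⟩ := hconst s
    refine ⟨m, ?_⟩
    have hlift : Φ ((F s).transNum) * g.toLift = ((F s).comp g).toLift := by
      rw [hΦas s]
      exact (H.toLift_comp (F s) g).symm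
    show (Φ ((F s).transNum) * g.toLift).translationNumber = _
    rw [hlift]
    exact hm
  have hUcont : Continuous U := by
    apply tau_cont
    intro n
    induction n with
    | zero => simpa using continuous_const
    | succ n ih =>
      have heq : (fun c => ((Φ c * g.toLift) ^ (n+1)) 0)
          = fun c => HS F (E.symm (g.toFun (((Φ c * g.toLift) ^ n) 0)) + c) := by
        funext c
        rw [pow_succ', mul_apply, mul_apply]
        rfl
      rw [heq]
      exact (HScont hF hfr).comp ((hEsymm_cont.comp ((H.cont g).comp ih)).add continuous_id)
  have hUint : ∀ c, ∃ m : ℤ, U c = g.transNum + m := by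
    have hclosed : IsClosed {y : ℝ | ∃ m : ℤ, y = g.transNum + m} := by
      have hpre : {y : ℝ | ∃ m : ℤ, y = g.transNum + m}
          = (fun y => y - g.transNum) ⁻¹' (Set.range (Int.cast : ℤ → ℝ)) := by
        ext y
        constructor
        · rintro ⟨m, rfl⟩; exact ⟨m, by ring⟩
        · rintro ⟨m, hm⟩
          exact ⟨m, by simp only [Set.mem_preimage] at hm; linarith [hm]⟩
      rw [hpre]
      exact (Int.isClosedEmbedding_coe_real.isClosed_range).preimage
        (continuous_id.sub continuous_const)
    have hsub2 : Set.range (fun t => (F t).transNum)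
        ⊆ U ⁻¹' {y | ∃ m : ℤ, y = g.transNum + m} := by
      rintro x ⟨s, rfl⟩
      exact hUdense s
    have hclosed2 : IsClosed (U ⁻¹' {y | ∃ m : ℤ, y = g.transNum + m}) :=
      hclosed.preimage hUcont
    intro c
    have huniv : (Set.univ : Set ℝ) ⊆ U ⁻¹' {y | ∃ m : ℤ, y = g.transNum + m} := by
      rw [← hclosed2.closure_eq]
      intro x _
      exact closure_mono hsub2 ((EAdense hF hfr) x)
    exact huniv (Set.mem_univ c)
  have hUc := int_valued_const hUcont g.transNum hUint 1
  have hU1 : U 1 = U 0 + 1 := by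
    have hlift : Φ 1 * g.toLift
        = ↑(translate (Multiplicative.ofAdd (1:ℝ))) * (Φ 0 * g.toLift) := by
      apply CircleDeg1Lift.ext; intro y
      rw [mul_apply, mul_apply]
      show Φ 1 (g.toFun y) = (1:ℝ) + (Φ 0 * g.toLift) y
      rw [mul_apply, hΦapp, hΦapp]
      show HS F (E.symm (g.toFun y) + 1) = 1 + HS F (E.symm (g.toFun y) + 0)
      rw [add_zero]
      have := hkey (E.symm (g.toFun y))
      rw [hδ1] at this
      rw [this]; ring
    have hcomm : Commute (↑(translate (Multiplicative.ofAdd (1:ℝ))) : CircleDeg1Lift)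
        (Φ 0 * g.toLift) := by
      apply CircleDeg1Lift.ext; intro y
      rw [mul_apply, mul_apply]
      show (1:ℝ) + (Φ 0 * g.toLift) y = (Φ 0 * g.toLift) ((1:ℝ) + y)
      rw [(Φ 0 * g.toLift).map_one_add y]
    show (Φ 1 * g.toLift).translationNumber = (Φ 0 * g.toLift).translationNumber + 1
    rw [hlift, translationNumber_mul_of_commute hcomm, translationNumber_translate]
    ring
  rw [hU1] at hUc
  linarith [hUc]

end Empty

end StmtAux

namespace StmtAux

theorem main_statement (f g : HomeoZR)
    (hf : RatRot f) (hg : RatRot g)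
    (F : ℝ → HomeoZR) (hF : PosFamily f F)
    (hconst : ∀ t : ℝ, ∃ m : ℤ, ((F t).comp g).transNum = g.transNum + m) :
    ∀ ε : ℝ, 0 < ε → ∃ t₀ : ℝ, ∀ t : ℝ, t₀ < t →
      ((F t).comp g).Per ⊆
        Metric.thickening ε (Pset F g ∪ frontier (Nset F g)) := by
  rcases (frontier f.Per).eq_empty_or_nonempty with hfr | ⟨x₀, hx₀⟩
  · exact absurd (empty_case hf hg hF hconst hfr) not_false
  obtain ⟨r, hr⟩ := hg
  intro ε hε
  by_contra hcon
  push_neg at hcon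
  set A : Set ℝ := Pset F g ∪ frontier (Nset F g) with hA
  -- A is invariant under integer translations
  have hNshift : ∀ (k : ℤ) (z : ℝ), z + (k:ℝ) ∈ Nset F g ↔ z ∈ Nset F g := by
    intro k z
    constructor
    · intro hz t
      have := hz t
      rwa [delta_int z t k] at this
    · intro hz t
      rw [delta_int z t k]
      exact hz t
  have hAshift : ∀ (k : ℤ) (z : ℝ), z ∈ A → z + (k:ℝ) ∈ A := by
    intro k z hz
    rcases hz with hz | hz
    · left
      intro t
      rw [delta_int z t k]
      exact hz t
    · right
      have hpre : (fun y : ℝ => y + (k:ℝ)) ⁻¹' (Nset F g) = Nset F g := by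
        ext y
        exact hNshift k y
      have heq := (Homeomorph.addRight ((k:ℝ))).preimage_frontier (Nset F g)
      have heq2 : frontier ((fun y : ℝ => y + (k:ℝ)) ⁻¹' (Nset F g))
          = (fun y : ℝ => y + (k:ℝ)) ⁻¹' frontier (Nset F g) := heq.symm
      rw [hpre] at heq2
      have : z + (k:ℝ) ∈ (fun y : ℝ => y + (k:ℝ)) '' frontier (Nset F g) := ⟨z, hz, rfl⟩
      rw [show (fun y : ℝ => y + (k:ℝ)) '' frontier (Nset F g)
          = (fun y : ℝ => y + (-k:ℝ)) ⁻¹' frontier (Nset F g) from ?_] at this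
      · have heq3 : (fun y : ℝ => y + ((-k : ℤ):ℝ)) ⁻¹' (Nset F g) = Nset F g := by
          ext y; exact hNshift (-k) y
        have heq4 := (Homeomorph.addRight (((-k:ℤ)):ℝ)).preimage_frontier (Nset F g)
        have heq5 : frontier ((fun y : ℝ => y + ((-k:ℤ):ℝ)) ⁻¹' (Nset F g))
            = (fun y : ℝ => y + ((-k:ℤ):ℝ)) ⁻¹' frontier (Nset F g) := heq4.symm
        rw [heq3] at heq5
        rw [show (fun y : ℝ => y + (-k:ℝ)) = (fun y : ℝ => y + ((-k:ℤ):ℝ)) from by push_cast; rfl,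
          ← heq5] at this
        exact this
      · ext y
        constructor
        · rintro ⟨w, hw, rfl⟩
          simp only [Set.mem_preimage]
          rw [show w + (k:ℝ) + (-k:ℝ) = w from by ring]
          exact hw
        · intro hy
          exact ⟨y + (-k:ℝ), hy, by ring⟩
  -- sequences
  have hcon' : ∀ n : ℕ, ∃ t : ℝ, (n:ℝ) < t ∧ ∃ x : ℝ,
      x ∈ ((F t).comp g).Per ∧ x ∉ Metric.thickening ε A := by
    intro n
    obtain ⟨t, htn, hsub⟩ := hcon n
    rw [Set.not_subset] at hsub
    obtain ⟨x, hx1, hx2⟩ := hsub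
    exact ⟨t, htn, x, hx1, hx2⟩
  choose T hTgt X hXper hXnt using hcon'
  set Y : ℕ → ℝ := fun n => Int.fract (X n) with hY
  have hYper : ∀ n, Y n ∈ ((F (T n)).comp g).Per := by
    intro n
    have := per_int (-⌊X n⌋) (hXper n)
    have he : X n + ((-⌊X n⌋ : ℤ):ℝ) = Y n := by
      show _ = Int.fract (X n)
      rw [Int.fract]
      push_cast; ring
    rwa [he] at this
  have hYdist : ∀ n, ∀ z ∈ A, ε ≤ dist (Y n) z := by
    intro n z hz
    have hz' : z + ((⌊X n⌋ : ℤ):ℝ) ∈ A := hAshift _ _ hz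
    have hnt := hXnt n
    rw [Metric.mem_thickening_iff] at hnt
    push_neg at hnt
    have := hnt _ hz'
    rw [Real.dist_eq] at this ⊢
    rw [hY]
    simp only [Int.fract]
    rw [show X n - ↑⌊X n⌋ - z = X n - (z + ↑⌊X n⌋) from by ring]
    exact this
  have hYmem : ∀ n, Y n ∈ Set.Icc (0:ℝ) 1 := by
    intro n
    exact ⟨Int.fract_nonneg _, (Int.fract_lt_one _).le⟩
  obtain ⟨xb, hxb, φ, hφmono, hφlim⟩ := (isCompact_Icc (a := (0:ℝ)) (b := 1)).tendsto_subseq hYmem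
  -- limit distance
  have hxbdist : ∀ z ∈ A, ε ≤ dist xb z := by
    intro z hz
    have hl : Tendsto (fun j => dist (Y (φ j)) z) atTop (𝓝 (dist xb z)) :=
      (Continuous.dist continuous_id continuous_const).continuousAt.tendsto.comp hφlim
    exact ge_of_tendsto hl (Filter.Eventually.of_forall fun j => hYdist _ z hz)
  have hxbA : xb ∉ A := by
    intro hmem
    have := hxbdist xb hmem
    simp at this
    linarith
  have hdel : ∀ j, delta F g (Y (φ j)) (T (φ j)) = 0 := fun j =>
    delta_per hF hx₀ hconst hr (T (φ j)) (hYper (φ j))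
  by_cases hxbN : xb ∈ Nset F g
  · -- xb in frontier of N : contradiction
    apply hxbA
    right
    rw [frontier_eq_closure_inter_closure]
    constructor
    · exact subset_closure hxbN
    · apply mem_closure_of_tendsto hφlim
      apply Filter.Eventually.of_forall
      intro j
      intro hmem
      exact hmem (T (φ j)) (hdel j)
  · -- xb has a zero; show it is in Pset
    have hex : ∃ t₁, delta F g xb t₁ = 0 := by
      by_contra hne
      push_neg at hne
      exact hxbN fun t => hne t
    obtain ⟨t₁, ht₁⟩ := hex
    have hle : ∀ t' : ℝ, delta F g xb t' ≤ 0 := by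
      intro t'
      have hlim : Tendsto (fun j => delta F g (Y (φ j)) t') atTop (𝓝 (delta F g xb t')) :=
        (delta_cont t').continuousAt.tendsto.comp hφlim
      apply le_of_tendsto hlim
      obtain ⟨N, hN⟩ := exists_nat_ge t'
      filter_upwards [Filter.eventually_ge_atTop N] with j hj
      have hTj : t' ≤ T (φ j) := by
        have h1 : (N:ℝ) ≤ (φ j : ℝ) := by
          exact_mod_cast le_trans hj (hφmono.le_apply)
        have h2 := hTgt (φ j)
        linarith
      calc delta F g (Y (φ j)) t' ≤ delta F g (Y (φ j)) (T (φ j)) :=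
        delta_mono hF hx₀ _ hTj
      _ = 0 := hdel j
    have h2 : delta F g xb (t₁ + 1) = 0 :=
      le_antisymm (hle _) (by rw [← ht₁]; exact delta_mono hF hx₀ _ (by linarith))
    apply hxbA
    left
    intro s
    exact delta_ray hF hx₀ hr ht₁ h2 s

end StmtAux

/-- Lemma 2.5 (4). For any `ε > 0` there is `t₀` such that for all
`t > t₀`, `Per(f_t ∘ g)` lies in the `ε`-neighborhood of `P(f,g) ∪ ∂N(f,g)`. -/
theorem Per_near_P_union_frontierN (f g : HomeoZR)
    (hf : RatRot f) (hg : RatRot g)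
    (F : ℝ → HomeoZR) (hF : PosFamily f F)
    (hconst : ∀ t : ℝ, ∃ m : ℤ, ((F t).comp g).transNum = g.transNum + m) :
    ∀ ε : ℝ, 0 < ε → ∃ t₀ : ℝ, ∀ t : ℝ, t₀ < t →
      ((F t).comp g).Per ⊆
        Metric.thickening ε (Pset F g ∪ frontier (Nset F g)) := by
  exact StmtAux.main_statement f g hf hg F hF hconst
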